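/- arXiv:1405.7849 — 4 statements merged into one kernel-verified Lean document; each statement's English description precedes it below -/
import Mathlib

section
/- There exists a constant C > 0 such that for all integers n and k with k even and 2 < k ≤ n, there exists a nondeterministic OBDD of width at most C·(log₂ k)²·log₂ log₂ k computing the Boolean function NotO^k_n. -/
/-- Number of 1s in a binary string ν ∈ {0,1}^n. -/
def countOnes {n : ℕ} (ν : Fin n → Bool) : ℕ :=
  (Finset.univ.filter (fun i => ν i = true)).card

/-- Number of 0s in a binary string ν ∈ {0,1}^n. -/
def countZeros {n : ℕ} (ν : Fin n → Bool) : ℕ :=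
  (Finset.univ.filter (fun i => ν i = false)).card

/-- Number of 1s among the first `k` bits. -/
def countOnesFirst (k : ℕ) {n : ℕ} (ν : Fin n → Bool) : ℕ :=
  (Finset.univ.filter (fun i : Fin n => (i : ℕ) < k ∧ ν i = true)).card

/-- Number of 0s among the first `k` bits. -/
def countZerosFirst (k : ℕ) {n : ℕ} (ν : Fin n → Bool) : ℕ :=
  (Finset.univ.filter (fun i : Fin n => (i : ℕ) < k ∧ ν i = false)).card

/-- A deterministic OBDD of width `d` on `n` Boolean variables. -/
structure DOBDD (n d : ℕ) where
  ord : Equiv.Perm (Fin n)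
  T : Fin n → Bool → Fin d → Fin d
  start : Fin d
  Accept : Finset (Fin d)

/-- The node reached by a deterministic OBDD after reading all input bits. -/
def DOBDD.run {n d : ℕ} (M : DOBDD n d) (ν : Fin n → Bool) : Fin d :=
  (List.finRange n).foldl (fun v j => M.T j (ν (M.ord j)) v) M.start

def DOBDD.accepts {n d : ℕ} (M : DOBDD n d) (ν : Fin n → Bool) : Prop :=
  M.run ν ∈ M.Accept

/-- A deterministic OBDD computes a total Boolean function. -/
def DOBDD.computes {n d : ℕ} (M : DOBDD n d) (f : (Fin n → Bool) → Bool) : Prop :=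
  ∀ ν, M.accepts ν ↔ f ν = true

/-- A nondeterministic OBDD of width `d` on `n` Boolean variables. -/
structure NOBDD (n d : ℕ) where
  ord : Equiv.Perm (Fin n)
  T : Fin n → Bool → Fin d → Set (Fin d)
  start : Fin d
  Accept : Finset (Fin d)

/-- The set of nodes reachable by a nondeterministic OBDD after reading all input bits. -/
def NOBDD.reach {n d : ℕ} (M : NOBDD n d) (ν : Fin n → Bool) : Set (Fin d) :=
  (List.finRange n).foldl (fun S j => {w | ∃ v ∈ S, w ∈ M.T j (ν (M.ord j)) v}) {M.start}

def NOBDD.accepts {n d : ℕ} (M : NOBDD n d) (ν : Fin n → Bool) : Prop :=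
  ∃ v ∈ M.reach ν, v ∈ M.Accept

/-- A nondeterministic OBDD computes a total Boolean function. -/
def NOBDD.computes {n d : ℕ} (M : NOBDD n d) (f : (Fin n → Bool) → Bool) : Prop :=
  ∀ ν, M.accepts ν ↔ f ν = true

/-- The class of Boolean functions on n variables computed by deterministic
OBDDs of width at most `w`. -/
def OBDDclass (n w : ℕ) : Set ((Fin n → Bool) → Bool) :=
  {f | ∃ d, d ≤ w ∧ ∃ M : DOBDD n d, M.computes f}

/-- The class of Boolean functions on n variables computed by nondeterministic
OBDDs of width at most `w`. -/
def NOBDDclass (n w : ℕ) : Set ((Fin n → Bool) → Bool) :=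
  {f | ∃ d, d ≤ w ∧ ∃ M : NOBDD n d, M.computes f}

/-- Final probability distribution of a stable probabilistic OBDD given by the pair of
left-stochastic matrices `A`, variable order `ord`, and initial node `s`. -/
noncomputable def stableProbRun {n d : ℕ} (A : Bool → Matrix (Fin d) (Fin d) ℝ)
    (ord : Equiv.Perm (Fin n)) (s : Fin d) (ν : Fin n → Bool) : Fin d → ℝ :=
  (List.finRange n).foldl (fun v j => (A (ν (ord j))).mulVec v)
    (fun i => if i = s then 1 else 0)

/-- Final quantum state of a stable ID quantum OBDD given by the pair of matrices `U`
and the initial computational-basis state `q0`, reading bits in the natural order. -/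
noncomputable def quantumRunStable {n d : ℕ} (U : Bool → Matrix (Fin d) (Fin d) ℂ) (q0 : Fin d)
    (ν : Fin n → Bool) : Fin d → ℂ :=
  (List.finRange n).foldl (fun ψ j => (U (ν j)).mulVec ψ)
    (fun i => if i = q0 then 1 else 0)

/-- A quantum OBDD of width `d` on `n` Boolean variables. -/
structure QOBDD (n d : ℕ) where
  ord : Equiv.Perm (Fin n)
  U : Fin n → Bool → Matrix (Fin d) (Fin d) ℂ
  unitary : ∀ j b, U j b ∈ Matrix.unitaryGroup (Fin d) ℂ
  q0 : Fin d
  Accept : Finset (Fin d)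

/-- The final state of a quantum OBDD on input ν. -/
noncomputable def QOBDD.finalState {n d : ℕ} (M : QOBDD n d) (ν : Fin n → Bool) : Fin d → ℂ :=
  (List.finRange n).foldl (fun ψ j => (M.U j (ν (M.ord j))).mulVec ψ)
    (fun i => if i = M.q0 then 1 else 0)

/-- The acceptance probability of a quantum OBDD on input ν. -/
noncomputable def QOBDD.acceptProb {n d : ℕ} (M : QOBDD n d) (ν : Fin n → Bool) : ℝ :=
  ∑ i ∈ M.Accept, Complex.normSq (M.finalState ν i)

/-- `NotO_n(ν) = 0` iff `#0(ν) = #1(ν)`. -/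
def NotO (n : ℕ) (ν : Fin n → Bool) : Bool := !decide (countZeros ν = countOnes ν)

/-- `NotSQUARE_n(ν) = 0` iff `(#0(ν))² = #1(ν)`. -/
def NotSQUARE (n : ℕ) (ν : Fin n → Bool) : Bool := !decide ((countZeros ν) ^ 2 = countOnes ν)

/-- `NotPOWER_n(ν) = 0` iff `2^{#0(ν)} = #1(ν)`. -/
def NotPOWER (n : ℕ) (ν : Fin n → Bool) : Bool := !decide (2 ^ (countZeros ν) = countOnes ν)

/-- `MOD^k_n(ν) = 1` iff `#1(ν) ≡ 0 (mod k)`. -/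
def MODf (n k : ℕ) (ν : Fin n → Bool) : Bool := decide (countOnes ν % k = 0)

/-- `NotO^k_n(ν) = 0` iff `#^k_0(ν) = #^k_1(ν) = k/2`. -/
def NotOk (n k : ℕ) (ν : Fin n → Bool) : Bool :=
  !decide (countZerosFirst k ν = k / 2 ∧ countOnesFirst k ν = k / 2)

/-- The ordered subsequence of value bits `ν_{2i}` (1-indexed, `1 ≤ i ≤ k/2`) whose
marker bit `ν_{2i-1}` equals `b`; `b = false` gives `α(ν)` and `b = true` gives `β(ν)`. -/
def valueSubseq {n : ℕ} (k : ℕ) (b : Bool) (ν : Fin n → Bool) : List Bool :=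
  (List.range (k / 2)).filterMap (fun j =>
    if h : 2 * j + 1 < n then
      if ν ⟨2 * j, by omega⟩ = b then some (ν ⟨2 * j + 1, h⟩) else none
    else none)

/-- `EQS^k_n(ν) = 1` iff `α(ν) = β(ν)`. -/
def EQS (n k : ℕ) (ν : Fin n → Bool) : Bool :=
  decide (valueSubseq k false ν = valueSubseq k true ν)

/-- `NotEQS^k_n(ν) = 1 - EQS^k_n(ν)`. -/
def NotEQS (n k : ℕ) (ν : Fin n → Bool) : Bool := !(EQS n k ν)

namespace NotOkAux

/-- Encoding of a pair (modulus, residue) as a natural number. -/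
def enc (M m r : ℕ) : ℕ := m * (M + 1) + r

lemma enc_lt {M m r : ℕ} (hm : m ≤ M) (hr : r ≤ M) : enc M m r < (M + 1) ^ 2 := by
  have h1 : m * (M + 1) ≤ M * (M + 1) := Nat.mul_le_mul_right _ hm
  have : (M + 1) ^ 2 = M * (M + 1) + (M + 1) := by ring
  simp only [enc]; omega

/-- Encoding as an element of `Fin ((M+1)^2)`. -/
def encF (M m r : ℕ) : Fin ((M + 1) ^ 2) :=
  ⟨enc M m r % (M + 1) ^ 2, Nat.mod_lt _ (by positivity)⟩

lemma encF_val {M m r : ℕ} (hm : m ≤ M) (hr : r ≤ M) : (encF M m r : ℕ) = enc M m r :=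
  Nat.mod_eq_of_lt (enc_lt hm hr)

lemma encF_div {M m r : ℕ} (hm : m ≤ M) (hr : r ≤ M) : ((encF M m r : ℕ)) / (M + 1) = m := by
  rw [encF_val hm hr, enc, mul_comm, Nat.mul_add_div (by omega)]
  rw [Nat.div_eq_of_lt (by omega)]; omega


lemma encF_mod {M m r : ℕ} (hm : m ≤ M) (hr : r ≤ M) : ((encF M m r : ℕ)) % (M + 1) = r := by
  rw [encF_val hm hr, enc, mul_comm, Nat.mul_add_mod, Nat.mod_eq_of_lt (by omega)]






lemma two_mul_le_two_pow {t : ℕ} (ht : 1 ≤ t) : 2 * t ≤ 2 ^ t := by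
  induction t with
  | zero => omega
  | succ s ih =>
    rcases Nat.eq_or_lt_of_le ht with h | h
    · simp [← h]
    · have hs : 1 ≤ s := by omega
      have h2 : (2:ℕ) ≤ 2 ^ s := by
        calc (2:ℕ) = 2^1 := rfl
        _ ≤ 2^s := Nat.pow_le_pow_right (by omega) hs
      have := ih hs
      rw [pow_succ]
      omega

lemma lcm_ne_zero {M : ℕ} : (Finset.Icc 1 M).lcm id ≠ 0 := by
  intro h
  rw [Finset.lcm_eq_zero_iff] at h
  obtain ⟨x, hx, hx0⟩ := h
  simp only [id_eq] at hx0
  subst hx0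
  simp at hx

lemma centralBinom_dvd_lcm {t : ℕ} (ht : 0 < t) :
    Nat.centralBinom t ∣ (Finset.Icc 1 (2 * t)).lcm id := by
  rw [← Nat.factorization_le_iff_dvd (Nat.centralBinom_ne_zero t) lcm_ne_zero]
  intro p
  by_cases hp : p.Prime
  · set e := (Nat.centralBinom t).factorization p with he
    rcases Nat.eq_zero_or_pos e with h0 | hpos
    · simp [← he, h0]
    have hpe : p ^ e ≤ 2 * t := by
      have := @Nat.pow_factorization_choose_le p (2 * t) t (by omega)
      simpa [Nat.centralBinom, he] using this
    have hmem : p ^ e ∈ Finset.Icc 1 (2 * t) := by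
      simp only [Finset.mem_Icc]
      exact ⟨Nat.one_le_pow _ _ hp.pos, hpe⟩
    have hdvd : p ^ e ∣ (Finset.Icc 1 (2 * t)).lcm id := Finset.dvd_lcm hmem
    exact (hp.pow_dvd_iff_le_factorization lcm_ne_zero).mp hdvd
  · simp [Nat.factorization_eq_zero_of_not_prime _ hp]

lemma two_pow_le_centralBinom {t : ℕ} (ht : 1 ≤ t) : 2 ^ t ≤ Nat.centralBinom t := by
  by_contra hc
  push_neg at hc
  have h4 : (4:ℕ) ^ t ≤ 2 * t * Nat.centralBinom t :=
    Nat.four_pow_le_two_mul_self_mul_centralBinom t (by omega)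
  have h2 : 2 * t * Nat.centralBinom t ≤ 2 ^ t * Nat.centralBinom t :=
    Nat.mul_le_mul_right _ (two_mul_le_two_pow ht)
  have h3 : 2 ^ t * Nat.centralBinom t < 2 ^ t * 2 ^ t := by
    have hp : 0 < 2 ^ t := by positivity
    exact Nat.mul_lt_mul_of_le_of_lt (le_refl _) hc hp
  have h5 : 2 ^ t * 2 ^ t = 4 ^ t := by
    rw [show (4:ℕ) = 2 * 2 from rfl, Nat.mul_pow]
  omega

lemma lt_lcm {k : ℕ} (hk : 4 ≤ k) :
    k < (Finset.Icc 1 (2 * (Nat.log 2 k + 1))).lcm id := by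
  set t := Nat.log 2 k + 1 with htdef
  have ht : 1 ≤ t := by omega
  have h1 : k < 2 ^ t := Nat.lt_pow_succ_log_self (by omega) k
  have h2 : 2 ^ t ≤ Nat.centralBinom t := two_pow_le_centralBinom ht
  have h3 : Nat.centralBinom t ≤ (Finset.Icc 1 (2 * t)).lcm id :=
    Nat.le_of_dvd (Nat.pos_of_ne_zero lcm_ne_zero) (centralBinom_dvd_lcm (by omega))
  omega

lemma eq_of_mods {M a b : ℕ} (hab : ∀ m, 1 ≤ m → m ≤ M → a % m = b % m)
    (ha : a < (Finset.Icc 1 M).lcm id) (hb : b < (Finset.Icc 1 M).lcm id) : a = b := by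
  rcases le_total a b with h | h
  · have hd : (Finset.Icc 1 M).lcm id ∣ b - a := by
      apply Finset.lcm_dvd
      intro m hm
      simp only [Finset.mem_Icc] at hm
      exact (Nat.modEq_iff_dvd' h).mp (hab m hm.1 hm.2)
    have := Nat.eq_zero_of_dvd_of_lt hd (by omega)
    omega
  · have hd : (Finset.Icc 1 M).lcm id ∣ a - b := by
      apply Finset.lcm_dvd
      intro m hm
      simp only [Finset.mem_Icc] at hm
      exact (Nat.modEq_iff_dvd' h).mp (hab m hm.1 hm.2).symm
    have := Nat.eq_zero_of_dvd_of_lt hd (by omega)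
    omega



/-- Deterministic transition: count ones among the first `k` positions mod `m`. -/
def machG (k M : ℕ) {n : ℕ} (j : Fin n) (b : Bool) (v : Fin ((M + 1) ^ 2)) :
    Fin ((M + 1) ^ 2) :=
  encF M ((v : ℕ) / (M + 1))
    (if (j : ℕ) < k ∧ b = true then ((v : ℕ) % (M + 1) + 1) % ((v : ℕ) / (M + 1))
     else (v : ℕ) % (M + 1))

/-- Transition relation: branch over all moduli at the first step, then deterministic. -/
def machT (k M : ℕ) {n : ℕ} (j : Fin n) (b : Bool) (v : Fin ((M + 1) ^ 2)) :
    Set (Fin ((M + 1) ^ 2)) :=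
  if (v : ℕ) / (M + 1) = 0 ∧ (j : ℕ) = 0 then
    {w | ∃ m, 2 ≤ m ∧ m ≤ M ∧ w = encF M m ((if b then 1 else 0) % m)}
  else {machG k M j b v}

/-- The nondeterministic OBDD for `NotOk`. -/
def mach (n k M : ℕ) : NOBDD n ((M + 1) ^ 2) where
  ord := Equiv.refl _
  T := fun j b v => machT k M j b v
  start := ⟨0, by positivity⟩
  Accept := Finset.univ.filter fun v =>
    2 ≤ (v : ℕ) / (M + 1) ∧ (v : ℕ) % (M + 1) ≠ (k / 2) % ((v : ℕ) / (M + 1))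

lemma foldl_det {δ ι : Type*} (T : ι → δ → Set δ) (g : ι → δ → δ)
    (l : List ι) (S : Set δ) (h : ∀ j ∈ l, ∀ v, T j v = {g j v}) :
    l.foldl (fun S j => {w | ∃ v ∈ S, w ∈ T j v}) S
      = (fun v => l.foldl (fun v j => g j v) v) '' S := by
  induction l generalizing S with
  | nil => simp
  | cons j l ih =>
    simp only [List.foldl_cons]
    rw [ih _ (fun a ha v => h a (List.mem_cons_of_mem _ ha) v)]
    have hstep : {w | ∃ v ∈ S, w ∈ T j v} = (g j) '' S := by
      ext w
      simp [h j List.mem_cons_self, eq_comm]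
    rw [hstep, Set.image_image]

lemma run_eq (k M : ℕ) {n n₀ : ℕ} (ν : Fin n₀ → Bool) (e : Fin n → Fin n₀) (l : List (Fin n)) (m r : ℕ)
    (hm2 : 2 ≤ m) (hmM : m ≤ M) (hr : r < m) :
    l.foldl (fun v j => machG k M (e j) (ν (e j)) v) (encF M m r)
      = encF M m ((r + (l.map (fun j : Fin n => if ((e j) : ℕ) < k ∧ ν (e j) = true then 1 else 0)).sum) % m) := by
  induction l generalizing r with
  | nil => simp [Nat.mod_eq_of_lt hr]
  | cons j l ih =>
    have hrM : r ≤ M := by omega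
    have hdiv : ((encF M m r : ℕ)) / (M + 1) = m := encF_div hmM hrM
    have hmod : ((encF M m r : ℕ)) % (M + 1) = r := encF_mod hmM hrM
    simp only [List.foldl_cons, List.map_cons, List.sum_cons]
    have hstep : machG k M (e j) (ν (e j)) (encF M m r)
        = encF M m (if ((e j) : ℕ) < k ∧ ν (e j) = true then (r + 1) % m else r) := by
      rw [machG, hdiv, hmod]
    rw [hstep]
    by_cases hcond : ((e j) : ℕ) < k ∧ ν (e j) = true
    · rw [if_pos hcond, if_pos hcond, ih _ (Nat.mod_lt _ (by omega))]
      congr 1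
      rw [Nat.mod_add_mod]
      congr 1
      omega
    · rw [if_neg hcond, if_neg hcond, ih _ hr]
      congr 2
      omega

lemma machT_det {k M n : ℕ} (j : Fin n) (b : Bool) (hj : (j : ℕ) ≠ 0)
    (v : Fin ((M + 1) ^ 2)) : machT k M j b v = {machG k M j b v} := by
  rw [machT, if_neg]
  tauto

lemma count_split {n' k : ℕ} (hk : 0 < k) (ν : Fin (n' + 1) → Bool) :
    countOnesFirst k ν = (if ν 0 then 1 else 0)
      + ((List.finRange n').map
          (fun j : Fin n' => if ((Fin.succ j : Fin (n' + 1)) : ℕ) < k ∧ ν (Fin.succ j) = true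
            then 1 else 0)).sum := by
  rw [countOnesFirst, Finset.card_filter, Fin.sum_univ_succ, Fin.sum_univ_def]
  congr 1
  simp [hk]

lemma reach_eq {n' k M : ℕ} (hk : 0 < k) (ν : Fin (n' + 1) → Bool) :
    (mach (n' + 1) k M).reach ν
      = {w | ∃ m, 2 ≤ m ∧ m ≤ M ∧ w = encF M m (countOnesFirst k ν % m)} := by
  rw [NOBDD.reach, List.finRange_succ, List.foldl_cons, List.foldl_map]
  have hord : ∀ j : Fin (n' + 1), (mach (n' + 1) k M).ord j = j := fun j => rfl
  have hT : (mach (n' + 1) k M).T = fun j b v => machT k M j b v := rfl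
  simp only [hord, hT]
  have h0 : {w | ∃ v ∈ ({(mach (n' + 1) k M).start} : Set (Fin ((M + 1) ^ 2))),
        w ∈ machT k M (0 : Fin (n' + 1)) (ν 0) v}
      = {w | ∃ m, 2 ≤ m ∧ m ≤ M ∧ w = encF M m ((if ν 0 then 1 else 0) % m)} := by
    ext w
    simp only [Set.mem_setOf_eq, Set.mem_singleton_iff, exists_eq_left]
    have hstart : (((mach (n' + 1) k M).start : Fin ((M + 1) ^ 2)) : ℕ) = 0 := rfl
    rw [machT, if_pos]
    · simp
    · constructor
      · rw [hstart, Nat.zero_div]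
      · simp
  rw [h0]
  rw [foldl_det (fun j v => machT k M (Fin.succ j) (ν (Fin.succ j)) v)
      (fun j v => machG k M (Fin.succ j) (ν (Fin.succ j)) v) _ _
      (fun j _ v => machT_det _ _ (by simp [Fin.val_succ]) v)]
  ext w
  simp only [Set.mem_image, Set.mem_setOf_eq]
  rw [count_split hk ν]
  set b0 : ℕ := if ν 0 then 1 else 0 with hb0
  set s : ℕ := ((List.finRange n').map
      (fun j : Fin n' => if ((Fin.succ j : Fin (n' + 1)) : ℕ) < k ∧ ν (Fin.succ j) = true
        then 1 else 0)).sum with hs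
  constructor
  · rintro ⟨v, ⟨m, h2m, hmM, rfl⟩, rfl⟩
    refine ⟨m, h2m, hmM, ?_⟩
    rw [run_eq k M ν Fin.succ _ m _ h2m hmM (Nat.mod_lt _ (by omega))]
    congr 1
    rw [Nat.mod_add_mod]
  · rintro ⟨m, h2m, hmM, rfl⟩
    refine ⟨encF M m (b0 % m), ⟨m, h2m, hmM, rfl⟩, ?_⟩
    rw [run_eq k M ν Fin.succ _ m _ h2m hmM (Nat.mod_lt _ (by omega))]
    congr 1
    rw [Nat.mod_add_mod]

lemma card_filter_lt {n k : ℕ} (hkn : k ≤ n) :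
    ((Finset.univ : Finset (Fin n)).filter fun i : Fin n => (i : ℕ) < k).card = k := by
  have h := Finset.card_bij (s := (Finset.univ : Finset (Fin n)).filter fun i : Fin n => (i : ℕ) < k)
    (t := Finset.range k) (fun (a : Fin n) _ => (a : ℕ)) ?_ ?_ ?_
  · rw [h, Finset.card_range]
  · intro a ha
    simp only [Finset.mem_filter, Finset.mem_univ, true_and] at ha
    simpa using ha
  · intro a _ b _ h
    exact Fin.val_injective h
  · intro b hb
    simp only [Finset.mem_range] at hb
    exact ⟨⟨b, lt_of_lt_of_le hb hkn⟩, by simp [hb], rfl⟩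

lemma countOnesFirst_le {n k : ℕ} (ν : Fin n → Bool) : countOnesFirst k ν ≤ k := by
  rw [countOnesFirst]
  have h := Finset.card_le_card_of_injOn
    (s := (Finset.univ : Finset (Fin n)).filter fun i : Fin n => (i : ℕ) < k ∧ ν i = true)
    (t := Finset.range k) (fun i => (i : ℕ)) ?_ ?_
  · rwa [Finset.card_range] at h
  · intro a ha
    simp only [Finset.mem_coe, Finset.mem_filter, Finset.mem_univ, true_and] at ha
    simpa using ha.1
  · exact fun a _ b _ h => Fin.val_injective h

lemma zeros_add_ones {n k : ℕ} (hkn : k ≤ n) (ν : Fin n → Bool) :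
    countZerosFirst k ν + countOnesFirst k ν = k := by
  rw [countZerosFirst, countOnesFirst, Finset.card_filter, Finset.card_filter,
    ← Finset.sum_add_distrib]
  have h : ∀ i : Fin n,
      ((if (i : ℕ) < k ∧ ν i = false then 1 else 0)
        + (if (i : ℕ) < k ∧ ν i = true then 1 else 0)) = if (i : ℕ) < k then 1 else 0 := by
    intro i
    by_cases h1 : (i : ℕ) < k <;> cases hb : ν i <;> simp [h1, hb]
  rw [Finset.sum_congr rfl (fun i _ => h i), ← Finset.card_filter]
  exact card_filter_lt hkn

lemma accepts_iff {n' k M : ℕ} (hk : 0 < k) (ν : Fin (n' + 1) → Bool) :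
    (mach (n' + 1) k M).accepts ν ↔
      ∃ m, 2 ≤ m ∧ m ≤ M ∧ countOnesFirst k ν % m ≠ (k / 2) % m := by
  rw [NOBDD.accepts]
  rw [reach_eq hk ν]
  set c := countOnesFirst k ν with hc
  have hAcc : (mach (n' + 1) k M).Accept = Finset.univ.filter fun v : Fin ((M + 1) ^ 2) =>
      2 ≤ (v : ℕ) / (M + 1) ∧ (v : ℕ) % (M + 1) ≠ (k / 2) % ((v : ℕ) / (M + 1)) := rfl
  constructor
  · rintro ⟨v, ⟨m, h2m, hmM, rfl⟩, hacc⟩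
    have hrm : c % m ≤ M := by
      have := Nat.mod_lt c (y := m) (by omega)
      omega
    rw [hAcc, Finset.mem_filter, encF_div hmM hrm, encF_mod hmM hrm] at hacc
    exact ⟨m, h2m, hmM, hacc.2.2⟩
  · rintro ⟨m, h2m, hmM, hne⟩
    refine ⟨encF M m (c % m), ⟨m, h2m, hmM, rfl⟩, ?_⟩
    have hrm : c % m ≤ M := by
      have := Nat.mod_lt c (y := m) (by omega)
      omega
    rw [hAcc, Finset.mem_filter, encF_div hmM hrm, encF_mod hmM hrm]
    exact ⟨Finset.mem_univ _, by omega, hne⟩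

end NotOkAux

/-- There is a constant `C > 0` such that for all `n, k` with `k` even and `2 < k ≤ n`,
there is a nondeterministic OBDD of width at most `C·(log₂ k)²·log₂ log₂ k` computing
`NotO^k_n`. -/
theorem notOk_nondeterministic_upper_bound :
    ∃ C : ℕ, 0 < C ∧
      ∀ n k : ℕ, Even k → 2 < k → k ≤ n →
        ∃ d : ℕ, d ≤ C * (Nat.log 2 k) ^ 2 * Nat.log 2 (Nat.log 2 k) ∧
          ∃ M : NOBDD n d, M.computes (NotOk n k) := by
  refine ⟨100, by norm_num, ?_⟩
  intro n k hkeven hk2 hkn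
  have hk4 : 4 ≤ k := by
    obtain ⟨r, rfl⟩ := hkeven
    omega
  have hL02 : 2 ≤ Nat.log 2 k :=
    (Nat.le_log_iff_pow_le (by omega) (by omega)).mpr (by omega : (2:ℕ) ^ 2 ≤ k)
  have hlt := NotOkAux.lt_lcm hk4
  set L0 := Nat.log 2 k with hL0
  set M := 2 * (L0 + 1) with hM
  obtain ⟨n', rfl⟩ : ∃ n', n = n' + 1 := ⟨n - 1, by omega⟩
  refine ⟨(M + 1) ^ 2, ?_, NotOkAux.mach (n' + 1) k M, ?_⟩
  · have hlog : 1 ≤ Nat.log 2 L0 := Nat.log_pos (by omega) hL02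
    have h1 : (M + 1) ^ 2 ≤ 100 * L0 ^ 2 := by
      rw [hM]
      nlinarith [hL02]
    calc (M + 1) ^ 2 ≤ 100 * L0 ^ 2 := h1
      _ = 100 * L0 ^ 2 * 1 := by ring
      _ ≤ 100 * L0 ^ 2 * Nat.log 2 L0 := Nat.mul_le_mul_left _ hlog
  · intro ν
    rw [NotOkAux.accepts_iff (by omega) ν]
    have hzo := NotOkAux.zeros_add_ones hkn ν
    have hcle := NotOkAux.countOnesFirst_le (k := k) ν
    have hk2' := Nat.even_iff.mp hkeven
    have hiff : (countZerosFirst k ν = k / 2 ∧ countOnesFirst k ν = k / 2)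
        ↔ countOnesFirst k ν = k / 2 := by omega
    have hNot : NotOk (n' + 1) k ν = true ↔ countOnesFirst k ν ≠ k / 2 := by
      simp [NotOk, hiff]
    rw [hNot]
    constructor
    · rintro ⟨m, h2m, hmM, hne⟩ heq
      rw [heq] at hne
      exact hne rfl
    · intro hcne
      by_contra hno
      push_neg at hno
      apply hcne
      apply NotOkAux.eq_of_mods (M := M)
      · intro m h1m hmM
        rcases Nat.eq_or_lt_of_le h1m with h | h
        · simp [← h, Nat.mod_one]
        · exact hno m (by omega) hmM
      · omega
      · omega
end

section
/- For all integers n and k with k a multiple of 4 and 4 ≤ k ≤ n, there exists a deterministic OBDD of width 8·2^{k/4} − 5 computing the Boolean function EQS^k_n. -/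
namespace EQSAux

/-- Injective encoding of lists of booleans: binary with sentinel. -/
def code : List Bool → ℕ
  | [] => 1
  | b :: t => b.toNat + 2 * code t

lemma one_le_code : ∀ l : List Bool, 1 ≤ code l
  | [] => le_refl 1
  | b :: t => by have := one_le_code t; unfold code; omega

lemma two_le_code_cons (b : Bool) (t : List Bool) : 2 ≤ code (b :: t) := by
  have := one_le_code t; unfold code; omega

lemma code_le : ∀ l : List Bool, code l ≤ 2 ^ (l.length + 1) - 1
  | [] => by simp [code]
  | b :: t => by
      have ih := code_le t
      have hb : b.toNat ≤ 1 := Bool.toNat_le b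
      have h1 : 1 ≤ (2:ℕ) ^ (t.length + 1) := Nat.one_le_two_pow
      have hp : (2:ℕ) ^ (t.length + 1 + 1) = 2 ^ (t.length + 1) * 2 := pow_succ 2 _
      simp only [code, List.length_cons]
      omega

lemma code_inj : ∀ l1 l2 : List Bool, code l1 = code l2 → l1 = l2 := by
  intro l1
  induction l1 with
  | nil =>
      intro l2 h
      cases l2 with
      | nil => rfl
      | cons c s =>
          exfalso
          have := one_le_code s
          have hc : c.toNat ≤ 1 := Bool.toNat_le c
          unfold code at h
          omega
  | cons b t ih =>
      intro l2 h
      cases l2 with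
      | nil =>
          exfalso
          have := one_le_code t
          have hb : b.toNat ≤ 1 := Bool.toNat_le b
          unfold code at h
          omega
      | cons c s =>
          unfold code at h
          have hb : b.toNat ≤ 1 := Bool.toNat_le b
          have hc : c.toNat ≤ 1 := Bool.toNat_le c
          have h2 : b.toNat = c.toNat ∧ code t = code s := by omega
          have hbc : b = c := by
            cases b <;> cases c <;> simp_all
          rw [hbc, ih s h2.2]

/-- The state space of the simulation: `none` is the dead state, `some (l, side, p)`
means the stream with marker `side` is ahead by excess `l`, and `p` stores a pending
marker bit between the two bits of a pair. -/
abbrev St := Option (List Bool × Bool × Bool)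

def encE (l : List Bool) (side : Bool) : ℕ :=
  if l = [] then 0 else 2 * (code l - 2) + side.toNat + 1

def enc : St → ℕ
  | none => 0
  | some (l, side, p) => 1 + 2 * encE l side + p.toNat

def valid (m : ℕ) : St → Prop
  | none => True
  | some (l, side, _) => l.length ≤ m ∧ (l = [] → side = false)

lemma enc_lt {m : ℕ} (hm : 1 ≤ m) : ∀ s : St, valid m s → enc s < 8 * 2 ^ m - 5 := by
  have h8 : 8 * 2 ^ m = 2 ^ (m + 3) := by ring
  have hm1 : (2:ℕ) ^ 1 ≤ 2 ^ m := Nat.pow_le_pow_right (by norm_num) hm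
  intro s hs
  match s with
  | none => simp only [enc]; omega
  | some (l, side, p) =>
      have hp : p.toNat ≤ 1 := Bool.toNat_le p
      have hsd : side.toNat ≤ 1 := Bool.toNat_le side
      by_cases hl : l = []
      · simp only [enc, encE, hl, if_true, if_pos]
        omega
      · have hlen : l.length ≤ m := hs.1
        have hcl : code l ≤ 2 ^ (l.length + 1) - 1 := code_le l
        have h2 : (2:ℕ) ^ (l.length + 1) ≤ 2 ^ (m + 1) :=
          Nat.pow_le_pow_right (by norm_num) (by omega)
        have hc2 : 2 ≤ code l := by
          cases l with
          | nil => exact absurd rfl hl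
          | cons b t => exact two_le_code_cons b t
        have e1 : (2:ℕ) ^ (m + 1) * 4 = 2 ^ (m + 3) := by ring
        simp only [enc, encE, hl, if_neg, if_false]
        omega

lemma enc_inj {m : ℕ} : ∀ s1 s2 : St, valid m s1 → valid m s2 → enc s1 = enc s2 → s1 = s2 := by
  intro s1 s2 h1 h2 he
  match s1, s2 with
  | none, none => rfl
  | none, some (l, sd, p) =>
      exfalso; have := Bool.toNat_le p; simp only [enc] at he; omega
  | some (l, sd, p), none =>
      exfalso; have := Bool.toNat_le p; simp only [enc] at he; omega
  | some (l1, sd1, p1), some (l2, sd2, p2) =>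
      simp only [enc] at he
      have hp1 : p1.toNat ≤ 1 := Bool.toNat_le p1
      have hp2 : p2.toNat ≤ 1 := Bool.toNat_le p2
      have hE : encE l1 sd1 = encE l2 sd2 ∧ p1.toNat = p2.toNat := by omega
      have hpp : p1 = p2 := by cases p1 <;> cases p2 <;> simp_all
      have hs1 : sd1.toNat ≤ 1 := Bool.toNat_le sd1
      have hs2 : sd2.toNat ≤ 1 := Bool.toNat_le sd2
      by_cases e1 : l1 = [] <;> by_cases e2 : l2 = []
      · have c1 : sd1 = false := h1.2 e1
        have c2 : sd2 = false := h2.2 e2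
        rw [hpp, e1, e2, c1, c2]
      · exfalso
        have hc2 : 2 ≤ code l2 := by
          cases l2 with
          | nil => exact absurd rfl e2
          | cons b t => exact two_le_code_cons b t
        have := hE.1
        simp only [encE, e1, e2, if_true, if_neg, if_false, if_pos] at this
        omega
      · exfalso
        have hc1 : 2 ≤ code l1 := by
          cases l1 with
          | nil => exact absurd rfl e1
          | cons b t => exact two_le_code_cons b t
        have := hE.1
        simp only [encE, e1, e2, if_true, if_neg, if_false, if_pos] at this
        omega
      · have hc1 : 2 ≤ code l1 := by
          cases l1 with
          | nil => exact absurd rfl e1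
          | cons b t => exact two_le_code_cons b t
        have hc2 : 2 ≤ code l2 := by
          cases l2 with
          | nil => exact absurd rfl e2
          | cons b t => exact two_le_code_cons b t
        have hE1 := hE.1
        simp only [encE, e1, e2, if_neg, if_false] at hE1
        have hcc : code l1 = code l2 ∧ sd1.toNat = sd2.toNat := by omega
        have hll : l1 = l2 := code_inj _ _ hcc.1
        have hss : sd1 = sd2 := by
          have := hcc.2; cases sd1 <;> cases sd2 <;> simp_all
        rw [hpp, hll, hss]

/-- The value-bit step of the pair logic: `p` is the stored marker, `side` the owner of
the excess `l`, and `b` the value bit just read. -/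
def stepVal (m : ℕ) (b p side : Bool) : List Bool → St
  | [] => some ([b], p, false)
  | c :: rest =>
      if p = side then
        if rest.length + 1 < m then some (c :: (rest ++ [b]), side, false) else none
      else
        if b = c then some (rest, if rest = [] then false else side, false) else none

def stepSome (m j : ℕ) (b : Bool) : List Bool × Bool × Bool → St
  | (l, side, p) => if j % 2 = 0 then some (l, side, b) else stepVal m b p side l

/-- One step of the simulating machine, reading bit `b` at level `j`. -/
def stepBit (m k : ℕ) (j : ℕ) (b : Bool) (s : St) : St :=
  if j < k then (match s with | none => none | some x => stepSome m j b x) else s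

lemma stepBit_none (m k j : ℕ) (b : Bool) : stepBit m k j b none = none := by
  unfold stepBit; split <;> rfl

lemma stepBit_ge (m k j : ℕ) (b : Bool) (s : St) (h : k ≤ j) : stepBit m k j b s = s := by
  unfold stepBit; rw [if_neg (by omega)]

lemma stepBit_some {m k j : ℕ} (h : j < k) (b : Bool) (l : List Bool) (side p : Bool) :
    stepBit m k j b (some (l, side, p)) =
      if j % 2 = 0 then some (l, side, b) else stepVal m b p side l := by
  simp [stepBit, stepSome, h]

lemma valid_stepVal {m : ℕ} (hm : 1 ≤ m) (b p side : Bool) :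
    ∀ l : List Bool, l.length ≤ m → valid m (stepVal m b p side l) := by
  intro l hlen
  rcases l with _ | ⟨c, rest⟩
  · exact ⟨by simpa using hm, by simp⟩
  · simp only [List.length_cons] at hlen
    rw [stepVal]
    split
    · split
      · exact ⟨by simp; omega, by simp⟩
      · trivial
    · split
      · exact ⟨by omega, by intro h; simp [h]⟩
      · trivial

lemma valid_stepBit {m k : ℕ} (hm : 1 ≤ m) (j : ℕ) (b : Bool) :
    ∀ s : St, valid m s → valid m (stepBit m k j b s) := by
  intro s hs
  rcases s with _ | ⟨l, side, p⟩
  · rw [stepBit_none]; trivial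
  · obtain ⟨hlen, hcan⟩ := hs
    by_cases hjk : j < k
    · rw [stepBit_some hjk]
      split
      · exact ⟨hlen, hcan⟩
      · exact valid_stepVal hm b p side l hlen
    · rw [stepBit_ge _ _ _ _ _ (by omega)]
      exact ⟨hlen, hcan⟩

section Runs

variable {n : ℕ} (ν : Fin n → Bool)

/-- The subsequence of value bits with marker `b` among the first `t` pairs. -/
def alpha (b : Bool) (t : ℕ) : List Bool :=
  (List.range t).filterMap (fun j =>
    if h : 2 * j + 1 < n then
      if ν ⟨2 * j, by omega⟩ = b then some (ν ⟨2 * j + 1, h⟩) else none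
    else none)

lemma alpha_zero (b : Bool) : alpha ν b 0 = [] := rfl

lemma alpha_succ (b : Bool) (t : ℕ) (h : 2 * t + 1 < n) :
    alpha ν b (t + 1) = alpha ν b t ++
      (if ν ⟨2 * t, by omega⟩ = b then [ν ⟨2 * t + 1, h⟩] else []) := by
  unfold alpha
  rw [List.range_succ, List.filterMap_append]
  congr 1
  by_cases hc : ν ⟨2 * t, by omega⟩ = b <;>
    simp [List.filterMap_cons, dif_pos h, hc]

lemma alpha_len_sum : ∀ t : ℕ, 2 * t ≤ n →
    (alpha ν false t).length + (alpha ν true t).length = t := by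
  intro t
  induction t with
  | zero => intro _; simp [alpha_zero]
  | succ t ih =>
      intro h
      have h1 : 2 * t + 1 < n := by omega
      rw [alpha_succ ν false t h1, alpha_succ ν true t h1]
      simp only [List.length_append]
      have ihh := ih (by omega)
      cases hb : ν ⟨2 * t, by omega⟩ <;> simp [hb] <;> omega

lemma alpha_prefix (b : Bool) {t t' : ℕ} (h : t ≤ t') : alpha ν b t <+: alpha ν b t' := by
  obtain ⟨s, rfl⟩ := Nat.exists_eq_add_of_le h
  unfold alpha
  rw [List.range_add, List.filterMap_append]
  exact ⟨_, rfl⟩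

/-- Invariant of the run after `t` pairs have been processed. -/
def Inv (m P t : ℕ) : St → Prop
  | none => alpha ν false P ≠ alpha ν true P
  | some (l, side, p) => p = false ∧ l.length ≤ m ∧ (l = [] → side = false) ∧
      (if side then alpha ν true t = alpha ν false t ++ l
       else alpha ν false t = alpha ν true t ++ l)

/-- The state of the simulation after reading the first `j` bits. -/
def runS (m k j : ℕ) : St :=
  (List.range j).foldl
    (fun s i => stepBit m k i (if h : i < n then ν ⟨i, h⟩ else false) s)
    (some ([], false, false))

lemma runS_succ (m k j : ℕ) :
    runS ν m k (j + 1) =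
      stepBit m k j (if h : j < n then ν ⟨j, h⟩ else false) (runS ν m k j) := by
  unfold runS
  rw [List.range_succ, List.foldl_append, List.foldl_cons, List.foldl_nil]

lemma valid_runS {m k : ℕ} (hm : 1 ≤ m) : ∀ j, valid m (runS ν m k j) := by
  intro j
  induction j with
  | zero => exact ⟨by simp, fun _ => rfl⟩
  | succ j ih => rw [runS_succ]; exact valid_stepBit hm _ _ _ ih

lemma runS_stable {m k : ℕ} : ∀ j, k ≤ j → runS ν m k j = runS ν m k k := by
  intro j
  induction j with
  | zero => intro h; rw [Nat.le_zero.mp h]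
  | succ j ih =>
      intro h
      rcases Nat.lt_or_ge k (j+1) with h' | h'
      · rw [runS_succ, stepBit_ge _ _ _ _ _ (by omega), ih (by omega)]
      · have hkj : k = j + 1 := le_antisymm h h'
        rw [hkj]
end Runs

section Invariant

variable {n : ℕ} (ν : Fin n → Bool)

lemma Inv_none_iff (m P t : ℕ) :
    Inv ν m P t none ↔ alpha ν false P ≠ alpha ν true P := Iff.rfl

lemma Inv_some_iff (m P t : ℕ) (l : List Bool) (side p : Bool) :
    Inv ν m P t (some (l, side, p)) ↔
      (p = false ∧ l.length ≤ m ∧ (l = [] → side = false) ∧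
        (if side then alpha ν true t = alpha ν false t ++ l
         else alpha ν false t = alpha ν true t ++ l)) := Iff.rfl

lemma overflow {q t : ℕ} {b1 b2 : Bool} (hn : 4 * q ≤ n) (ht : t + 1 ≤ 2 * q)
    (hb : b1 ≠ b2)
    (hgap : (alpha ν b2 (t+1)).length + q + 1 ≤ (alpha ν b1 (t+1)).length) :
    alpha ν false (2 * q) ≠ alpha ν true (2 * q) := by
  intro hEq
  have hsum := alpha_len_sum ν (2 * q) (by omega)
  have hl1 : (alpha ν false (2*q)).length = (alpha ν true (2*q)).length := by rw [hEq]
  have hq1 : (alpha ν b1 (2*q)).length = q := by cases b1 <;> omega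
  have hpref : (alpha ν b1 (t+1)).length ≤ (alpha ν b1 (2*q)).length :=
    (alpha_prefix ν b1 (by omega)).length_le
  omega

lemma mismatch {q t : ℕ} {b1 b2 c v : Bool} {rest : List Bool}
    (ht : t + 1 ≤ 2 * q) (hb : b1 ≠ b2)
    (hlong : alpha ν b1 (t+1) = alpha ν b2 t ++ c :: rest)
    (hshort : alpha ν b2 (t+1) = alpha ν b2 t ++ [v])
    (hvc : v ≠ c) :
    alpha ν false (2 * q) ≠ alpha ν true (2 * q) := by
  intro hEq
  have hPeq : alpha ν b1 (2*q) = alpha ν b2 (2*q) := by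
    cases b1 <;> cases b2 <;> first | exact absurd rfl hb | exact hEq | exact hEq.symm
  have p1 : alpha ν b1 (t+1) <+: alpha ν b1 (2*q) := alpha_prefix ν b1 (by omega)
  have p2 : alpha ν b2 (t+1) <+: alpha ν b1 (2*q) := by
    rw [hPeq]; exact alpha_prefix ν b2 (by omega)
  have hle : (alpha ν b2 (t+1)).length ≤ (alpha ν b1 (t+1)).length := by
    rw [hlong, hshort]; simp [List.length_append]
  have hpp : alpha ν b2 (t+1) <+: alpha ν b1 (t+1) :=
    List.prefix_of_prefix_length_le p2 p1 hle
  rw [hlong, hshort] at hpp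
  have h2 := (List.prefix_append_right_inj (alpha ν b2 t)).mp hpp
  exact hvc ((List.cons_prefix_cons.mp h2).1)

lemma inv_runS {k q : ℕ} (hq : k = 4 * q) (hq1 : 1 ≤ q) (hn : k ≤ n) :
    ∀ t, t ≤ 2 * q → Inv ν q (2 * q) t (runS ν q k (2 * t)) := by
  intro t
  induction t with
  | zero =>
      intro _
      have h0 : runS ν q k (2 * 0) = some ([], false, false) := rfl
      rw [h0, Inv_some_iff]
      exact ⟨rfl, by simp, fun _ => rfl, by simp [alpha_zero]⟩
  | succ t ih =>
      intro ht
      have hinv := ih (by omega)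
      have h2t : 2 * t < k := by omega
      have h2t1 : 2 * t + 1 < k := by omega
      have h2tn : 2 * t < n := by omega
      have h2t1n : 2 * t + 1 < n := by omega
      have hmod0 : (2 * t) % 2 = 0 := by omega
      have hmod1 : ¬((2 * t + 1) % 2 = 0) := by omega
      have estep : 2 * (t + 1) = (2 * t + 1) + 1 := by omega
      rw [estep, runS_succ, runS_succ, dif_pos h2tn, dif_pos h2t1n]
      cases hrs : runS ν q k (2 * t) with
      | none =>
          rw [hrs] at hinv
          rw [stepBit_none, stepBit_none]
          exact hinv
      | some x =>
          obtain ⟨l, side, p⟩ := x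
          rw [hrs] at hinv
          obtain ⟨hp, hlen, hcan, heqn⟩ := (Inv_some_iff ν _ _ _ _ _ _).mp hinv
          rw [stepBit_some h2t, if_pos hmod0, stepBit_some h2t1, if_neg hmod1]
          cases hmv : ν ⟨2 * t, h2tn⟩ with
          | false =>
              have hA1 : alpha ν false (t+1) = alpha ν false t ++ [ν ⟨2*t+1, h2t1n⟩] := by
                rw [alpha_succ ν false t h2t1n]; simp [hmv]
              have hB1 : alpha ν true (t+1) = alpha ν true t := by
                rw [alpha_succ ν true t h2t1n]; simp [hmv]
              cases l with
              | nil =>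
                  have hside : side = false := hcan rfl
                  subst hside
                  simp only [if_neg Bool.false_ne_true, List.append_nil] at heqn
                  rw [show stepVal q (ν ⟨2*t+1, h2t1n⟩) false false [] =
                      some ([ν ⟨2*t+1, h2t1n⟩], false, false) from rfl, Inv_some_iff]
                  refine ⟨rfl, by simpa using hq1, by simp, ?_⟩
                  rw [if_neg Bool.false_ne_true, hA1, hB1, heqn]
              | cons c rest =>
                  simp only [List.length_cons] at hlen
                  cases side with
                  | false =>
                      simp only [if_neg Bool.false_ne_true] at heqn
                      rw [show stepVal q (ν ⟨2*t+1, h2t1n⟩) false false (c :: rest) =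
                          (if rest.length + 1 < q
                           then some (c :: (rest ++ [ν ⟨2*t+1, h2t1n⟩]), false, false)
                           else none) from by simp [stepVal]]
                      by_cases hlt : rest.length + 1 < q
                      · rw [if_pos hlt, Inv_some_iff]
                        refine ⟨rfl, by simp; omega, by simp, ?_⟩
                        rw [if_neg Bool.false_ne_true, hA1, hB1, heqn]
                        simp
                      · rw [if_neg hlt]
                        refine overflow (b1 := false) (b2 := true) ν (by omega) ht (by simp) ?_
                        have e1 : (alpha ν false (t+1)).length
                            = (alpha ν true t).length + (rest.length + 1) + 1 := by
                          rw [hA1, heqn]; simp [List.length_append]; omega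
                        rw [hB1]
                        omega
                  | true =>
                      rw [if_pos rfl] at heqn
                      rw [show stepVal q (ν ⟨2*t+1, h2t1n⟩) false true (c :: rest) =
                          (if ν ⟨2*t+1, h2t1n⟩ = c
                           then some (rest, if rest = [] then false else true, false)
                           else none) from by simp [stepVal]]
                      by_cases hvc : ν ⟨2*t+1, h2t1n⟩ = c
                      · rw [if_pos hvc]
                        by_cases hrest : rest = []
                        · subst hrest
                          rw [if_pos rfl, Inv_some_iff]
                          refine ⟨rfl, by simp, fun _ => rfl, ?_⟩
                          rw [if_neg Bool.false_ne_true, hA1, hB1, heqn, hvc]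
                          simp
                        · rw [if_neg hrest, Inv_some_iff]
                          refine ⟨rfl, by omega, fun h => absurd h hrest, ?_⟩
                          rw [if_pos rfl, hA1, hB1, heqn, hvc]
                          simp
                      · rw [if_neg hvc]
                        refine mismatch (b1 := true) (b2 := false) (rest := rest) ν ht (by simp) ?_ ?_ hvc
                        · rw [hB1, heqn]
                        · exact hA1
          | true =>
              have hA1 : alpha ν false (t+1) = alpha ν false t := by
                rw [alpha_succ ν false t h2t1n]; simp [hmv]
              have hB1 : alpha ν true (t+1) = alpha ν true t ++ [ν ⟨2*t+1, h2t1n⟩] := by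
                rw [alpha_succ ν true t h2t1n]; simp [hmv]
              cases l with
              | nil =>
                  have hside : side = false := hcan rfl
                  subst hside
                  simp only [if_neg Bool.false_ne_true, List.append_nil] at heqn
                  rw [show stepVal q (ν ⟨2*t+1, h2t1n⟩) true false [] =
                      some ([ν ⟨2*t+1, h2t1n⟩], true, false) from rfl, Inv_some_iff]
                  refine ⟨rfl, by simpa using hq1, by simp, ?_⟩
                  rw [if_pos rfl, hA1, hB1, heqn]
              | cons c rest =>
                  simp only [List.length_cons] at hlen
                  cases side with
                  | true =>
                      rw [if_pos rfl] at heqn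
                      rw [show stepVal q (ν ⟨2*t+1, h2t1n⟩) true true (c :: rest) =
                          (if rest.length + 1 < q
                           then some (c :: (rest ++ [ν ⟨2*t+1, h2t1n⟩]), true, false)
                           else none) from by simp [stepVal]]
                      by_cases hlt : rest.length + 1 < q
                      · rw [if_pos hlt, Inv_some_iff]
                        refine ⟨rfl, by simp; omega, by simp, ?_⟩
                        rw [if_pos rfl, hA1, hB1, heqn]
                        simp
                      · rw [if_neg hlt]
                        refine overflow (b1 := true) (b2 := false) ν (by omega) ht (by simp) ?_
                        have e1 : (alpha ν true (t+1)).length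
                            = (alpha ν false t).length + (rest.length + 1) + 1 := by
                          rw [hB1, heqn]; simp [List.length_append]; omega
                        rw [hA1]
                        omega
                  | false =>
                      simp only [if_neg Bool.false_ne_true] at heqn
                      rw [show stepVal q (ν ⟨2*t+1, h2t1n⟩) true false (c :: rest) =
                          (if ν ⟨2*t+1, h2t1n⟩ = c
                           then some (rest, false, false)
                           else none) from by simp [stepVal]]
                      by_cases hvc : ν ⟨2*t+1, h2t1n⟩ = c
                      · rw [if_pos hvc, Inv_some_iff]
                        refine ⟨rfl, by omega, fun _ => rfl, ?_⟩
                        rw [if_neg Bool.false_ne_true, hA1, hB1, heqn, hvc]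
                        simp
                      · rw [if_neg hvc]
                        refine mismatch (b1 := false) (b2 := true) (rest := rest) ν ht (by simp) ?_ ?_ hvc
                        · rw [hA1, heqn]
                        · exact hB1

lemma final_iff {k q : ℕ} (hq : k = 4 * q) (hq1 : 1 ≤ q) (hn : k ≤ n) :
    (runS ν q k k = some ([], false, false)) ↔
      alpha ν false (2 * q) = alpha ν true (2 * q) := by
  have hinv := inv_runS ν hq hq1 hn (2 * q) (le_refl _)
  rw [show 2 * (2 * q) = k by omega] at hinv
  cases hc : runS ν q k k with
  | none =>
      rw [hc] at hinv
      exact iff_of_false (by simp) (fun h => hinv h)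
  | some x =>
      obtain ⟨l, side, p⟩ := x
      rw [hc] at hinv
      obtain ⟨hp, hlen, hcan, heqn⟩ := (Inv_some_iff ν _ _ _ _ _ _).mp hinv
      subst hp
      cases l with
      | nil =>
          have hside := hcan rfl
          subst hside
          simp only [if_neg Bool.false_ne_true, List.append_nil] at heqn
          simp [heqn]
      | cons c rest =>
          cases side with
          | false =>
              simp only [if_neg Bool.false_ne_true] at heqn
              refine iff_of_false (by simp) ?_
              intro h
              have hl := congrArg List.length h
              have hl2 := congrArg List.length heqn
              simp only [List.length_append, List.length_cons] at hl hl2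
              omega
          | true =>
              rw [if_pos rfl] at heqn
              refine iff_of_false (by simp) ?_
              intro h
              have hl := congrArg List.length h
              have hl2 := congrArg List.length heqn
              simp only [List.length_append, List.length_cons] at hl hl2
              omega


end Invariant

section Machine

noncomputable def encF (d : ℕ) (hd : 0 < d) (s : St) : Fin d :=
  if h : enc s < d then ⟨enc s, h⟩ else ⟨0, hd⟩

open Classical in
noncomputable def decF (m d : ℕ) (hd : 0 < d) (v : Fin d) : St :=
  if h : ∃ s : St, valid m s ∧ encF d hd s = v then h.choose else none

lemma encF_inj {m d : ℕ} (hd : 0 < d) (hdd : ∀ s : St, valid m s → enc s < d)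
    {s1 s2 : St} (h1 : valid m s1) (h2 : valid m s2)
    (he : encF d hd s1 = encF d hd s2) : s1 = s2 := by
  unfold encF at he
  rw [dif_pos (hdd s1 h1), dif_pos (hdd s2 h2)] at he
  exact enc_inj (m := m) s1 s2 h1 h2 (Fin.mk.inj_iff.mp he)

lemma decF_encF {m d : ℕ} (hd : 0 < d) (hdd : ∀ s : St, valid m s → enc s < d)
    {s : St} (hs : valid m s) : decF m d hd (encF d hd s) = s := by
  unfold decF
  have hex : ∃ s' : St, valid m s' ∧ encF d hd s' = encF d hd s := ⟨s, hs, rfl⟩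
  rw [dif_pos hex]
  obtain ⟨hv, he⟩ := hex.choose_spec
  exact encF_inj hd hdd hv hs he

end Machine

end EQSAux

/-- For all `n, k` with `4 ∣ k` and `4 ≤ k ≤ n`, there is a deterministic OBDD of width
`8·2^{k/4} - 5` computing `EQS^k_n`. -/
theorem EQS_upper_bound (n k : ℕ) (hk : 4 ∣ k) (h1 : 4 ≤ k) (h2 : k ≤ n) :
    ∃ M : DOBDD n (8 * 2 ^ (k / 4) - 5), M.computes (EQS n k) := by
  classical
  obtain ⟨q, hq⟩ := hk
  have hq1 : 1 ≤ q := by omega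
  have hkq : k / 4 = q := by omega
  have hk2 : k / 2 = 2 * q := by omega
  set d := 8 * 2 ^ (k / 4) - 5 with hdDef
  have h2q : 2 ≤ 2 ^ q := by
    calc (2:ℕ) = 2 ^ 1 := rfl
    _ ≤ 2 ^ q := Nat.pow_le_pow_right (by norm_num) hq1
  have hd : 0 < d := by rw [hdDef, hkq]; omega
  have hdd : ∀ s : EQSAux.St, EQSAux.valid q s → EQSAux.enc s < d := by
    rw [hdDef, hkq]; exact EQSAux.enc_lt hq1
  refine ⟨{ ord := Equiv.refl _,
            T := fun j b v => EQSAux.encF d hd (EQSAux.stepBit q k (j : ℕ) b (EQSAux.decF q d hd v)),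
            start := EQSAux.encF d hd (some ([], false, false)),
            Accept := {EQSAux.encF d hd (some ([], false, false))} }, ?_⟩
  intro ν
  have hstart_valid : EQSAux.valid q (some (([] : List Bool), false, false)) :=
    ⟨by simp, fun _ => rfl⟩
  have hsim : ∀ (L : List (Fin n)) (s : EQSAux.St), EQSAux.valid q s →
      L.foldl (fun (v : Fin d) (j : Fin n) => EQSAux.encF d hd
          (EQSAux.stepBit q k (j : ℕ) (ν j) (EQSAux.decF q d hd v))) (EQSAux.encF d hd s)
        = EQSAux.encF d hd (L.foldl (fun (s : EQSAux.St) (j : Fin n) => EQSAux.stepBit q k (j : ℕ) (ν j) s) s) := by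
    intro L
    induction L with
    | nil => intro s _; rfl
    | cons a L ihL =>
        intro s hs
        simp only [List.foldl_cons]
        rw [EQSAux.decF_encF hd hdd hs]
        exact ihL _ (EQSAux.valid_stepBit hq1 _ _ _ hs)
  have hrun :
      (List.finRange n).foldl (fun (v : Fin d) (j : Fin n) => EQSAux.encF d hd
          (EQSAux.stepBit q k (j : ℕ) (ν j) (EQSAux.decF q d hd v)))
        (EQSAux.encF d hd (some ([], false, false)))
      = EQSAux.encF d hd (EQSAux.runS ν q k n) := by
    rw [hsim (List.finRange n) _ hstart_valid]
    congr 1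
    unfold EQSAux.runS
    rw [← List.map_coe_finRange_eq_range (n := n), List.foldl_map]
    have hfun : (fun (s : EQSAux.St) (j : Fin n) =>
        EQSAux.stepBit q k (j : ℕ) (if h : (j : ℕ) < n then ν ⟨j, h⟩ else false) s)
        = fun (s : EQSAux.St) (j : Fin n) => EQSAux.stepBit q k (j : ℕ) (ν j) s := by
      funext s j
      rw [dif_pos j.isLt]
    rw [hfun]
  have hvalidrun : EQSAux.valid q (EQSAux.runS ν q k n) := EQSAux.valid_runS ν hq1 n
  have hstable : EQSAux.runS ν q k n = EQSAux.runS ν q k k := EQSAux.runS_stable ν n h2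
  have hEQS : EQS n k ν = true ↔
      EQSAux.alpha ν false (2 * q) = EQSAux.alpha ν true (2 * q) := by
    have hf : valueSubseq k false ν = EQSAux.alpha ν false (2 * q) := by
      rw [show EQSAux.alpha ν false (2 * q) = EQSAux.alpha ν false (k / 2) by rw [hk2]]
      rfl
    have htr : valueSubseq k true ν = EQSAux.alpha ν true (2 * q) := by
      rw [show EQSAux.alpha ν true (2 * q) = EQSAux.alpha ν true (k / 2) by rw [hk2]]
      rfl
    simp only [EQS, decide_eq_true_eq, hf, htr]
  have hfin := EQSAux.final_iff ν hq hq1 h2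
  show _ ∈ ({EQSAux.encF d hd (some ([], false, false))} : Finset (Fin d)) ↔ _
  rw [Finset.mem_singleton]
  show (List.finRange n).foldl (fun (v : Fin d) (j : Fin n) => EQSAux.encF d hd
          (EQSAux.stepBit q k (j : ℕ) (ν j) (EQSAux.decF q d hd v)))
        (EQSAux.encF d hd (some ([], false, false)))
      = EQSAux.encF d hd (some ([], false, false)) ↔ _
  rw [hrun, hEQS]
  constructor
  · intro h
    have hrg : EQSAux.runS ν q k n = some ([], false, false) :=
      EQSAux.encF_inj hd hdd hvalidrun hstart_valid h
    exact hfin.mp (by rw [← hstable]; exact hrg)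
  · intro h
    have hgd : EQSAux.runS ν q k n = some ([], false, false) := by
      rw [hstable]; exact hfin.mpr h
    rw [hgd]
end

section
/- For every integer k that is a multiple of 4 with k ≥ 4, there are infinitely many n such that every deterministic OBDD on n variables computing the Boolean function NotEQS^k_n has width at least 2^{k/4}. -/
private lemma foldl_congr_mem' {α β : Type*} : ∀ (l : List β) (f g : α → β → α) (a : α),
    (∀ b ∈ l, ∀ x, f x b = g x b) → l.foldl f a = l.foldl g a
  | [], _, _, _, _ => rfl
  | b :: l, f, g, a, h => by
    rw [List.foldl_cons, List.foldl_cons, h b List.mem_cons_self]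
    exact foldl_congr_mem' l f g _ (fun b' hb' x => h b' (List.mem_cons_of_mem _ hb') x)

private lemma hits' (f : ℕ → ℕ) (h0 : f 0 = 0) (hstep : ∀ t, f (t+1) ≤ f t + 1) (q : ℕ) :
    ∀ n, q ≤ f n → ∃ t, t ≤ n ∧ f t = q := by
  intro n
  induction n with
  | zero => intro h; exact ⟨0, le_refl _, by omega⟩
  | succ n ih =>
    intro h
    by_cases h' : q ≤ f n
    · obtain ⟨t, ht, hft⟩ := ih h'
      exact ⟨t, Nat.le_succ_of_le ht, hft⟩
    · exact ⟨n+1, le_refl _, by have := hstep n; omega⟩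

private lemma filterMap_ite' {α β : Type*} (p : α → Prop) [DecidablePred p] (g : α → β) :
    ∀ l : List α, l.filterMap (fun j => if p j then some (g j) else none)
      = (l.filter (fun j => decide (p j))).map g
  | [] => rfl
  | a :: l => by
    by_cases h : p a <;>
      simp [List.filterMap_cons, List.filter_cons, h, filterMap_ite' p g l]

private lemma eq_of_perm_of_sorted' {l₁ l₂ : List ℕ} (hp : l₁.Perm l₂)
    (h₁ : l₁.Pairwise (· ≤ ·)) (h₂ : l₂.Pairwise (· ≤ ·)) : l₁ = l₂ :=
  hp.eq_of_pairwise' h₁ h₂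

private lemma filterMap_range_eq_ofFn' {m q : ℕ} (S : Finset ℕ) (hS : ∀ j ∈ S, j < m)
    (hcard : S.card = q) (g : ℕ → Bool) :
    (List.range m).filterMap (fun j => if j ∈ S then some (g j) else none)
      = List.ofFn (fun i : Fin q => g (S.orderEmbOfFin hcard i)) := by
  rw [filterMap_ite']
  have hfil : (List.range m).filter (fun j => decide (j ∈ S)) = S.sort (· ≤ ·) := by
    apply eq_of_perm_of_sorted'
    · rw [List.perm_ext_iff_of_nodup ((List.nodup_range (n := m)).filter _) (S.sort_nodup _)]
      intro a
      simp only [List.mem_filter, List.mem_range, decide_eq_true_eq, Finset.mem_sort]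
      exact ⟨fun h => h.2, fun h => ⟨hS a h, h⟩⟩
    · exact (List.pairwise_le_range (n := m)).filter _
    · exact S.pairwise_sort _
  rw [hfil]
  apply List.ext_getElem
  · simp [Finset.length_sort, hcard]
  · intro i h1 h2
    simp only [List.getElem_map, List.getElem_ofFn]
    rw [Finset.orderEmbOfFin_apply]
    rfl

private lemma rank_inv' {q : ℕ} (S : Finset ℕ) (hcard : S.card = q) (i : Fin q)
    (h : (S.orderEmbOfFin hcard i : ℕ) ∈ S) :
    (S.orderIsoOfFin hcard).symm ⟨S.orderEmbOfFin hcard i, h⟩ = i := by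
  apply (S.orderIsoOfFin hcard).injective
  rw [OrderIso.apply_symm_apply]
  exact Subtype.ext (by simp)

/-- For every `k` a multiple of 4 with `k ≥ 4`, there are infinitely many `n` such that
any deterministic OBDD computing `NotEQS^k_n` has width at least `2^{k/4}`. -/
theorem notEQS_deterministic_lower_bound (k : ℕ) (hk : 4 ∣ k) (h1 : 4 ≤ k) :
    ∀ N : ℕ, ∃ n, N ≤ n ∧ k ≤ n ∧
      ∀ (d : ℕ) (M : DOBDD n d), M.computes (NotEQS n k) → 2 ^ (k / 4) ≤ d := by
  obtain ⟨q, rfl⟩ := hk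
  have hq1 : 1 ≤ q := by omega
  have main : ∀ n : ℕ, 4*q ≤ n → ∀ (d : ℕ) (M : DOBDD n d),
      M.computes (NotEQS n (4*q)) → 2 ^ (4*q/4) ≤ d := by
    intro n hkn d M hM
    set m := 2*q with hm
    have hm2 : 4*q/2 = m := by omega
    -- read times of value bits
    set rt : ℕ → ℕ := fun j => if h : 2*j+1 < n then ((M.ord.symm ⟨2*j+1, h⟩ : Fin n) : ℕ) else 0
      with hrt
    have hrtinj : ∀ j1 ∈ Finset.range m, ∀ j2 ∈ Finset.range m, rt j1 = rt j2 → j1 = j2 := by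
      intro j1 hj1 j2 hj2 h
      simp only [Finset.mem_range] at hj1 hj2
      have hb1 : 2*j1+1 < n := by omega
      have hb2 : 2*j2+1 < n := by omega
      rw [hrt] at h
      simp only [dif_pos hb1, dif_pos hb2] at h
      have h2 : M.ord.symm ⟨2*j1+1, hb1⟩ = M.ord.symm ⟨2*j2+1, hb2⟩ := Fin.val_injective h
      have h3 := M.ord.symm.injective h2
      have h4 : 2*j1+1 = 2*j2+1 := congrArg Fin.val h3
      omega
    -- the counting function and the cut
    set f : ℕ → ℕ := fun t => ((Finset.range m).filter (fun j => rt j < t)).card with hf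
    have hf0 : f 0 = 0 := by simp [hf]
    have hfstep : ∀ t, f (t+1) ≤ f t + 1 := by
      intro t
      have hsub : (Finset.range m).filter (fun j => rt j < t+1) ⊆
          ((Finset.range m).filter (fun j => rt j < t)) ∪
            ((Finset.range m).filter (fun j => rt j = t)) := by
        intro j hj
        simp only [Finset.mem_filter, Finset.mem_union] at hj ⊢
        by_cases h : rt j < t
        · exact Or.inl ⟨hj.1, h⟩
        · exact Or.inr ⟨hj.1, by omega⟩
      have hone : ((Finset.range m).filter (fun j => rt j = t)).card ≤ 1 := by
        apply Finset.card_le_one.2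
        intro a ha b hb
        simp only [Finset.mem_filter] at ha hb
        exact hrtinj a (Finset.mem_range.2 (Finset.mem_range.1 ha.1)) b
          (Finset.mem_range.2 (Finset.mem_range.1 hb.1)) (ha.2.trans hb.2.symm)
      calc f (t+1) ≤ _ := Finset.card_le_card hsub
        _ ≤ f t + ((Finset.range m).filter (fun j => rt j = t)).card :=
            Finset.card_union_le _ _
        _ ≤ f t + 1 := by omega
    have hfn : q ≤ f n := by
      have : (Finset.range m).filter (fun j => rt j < n) = Finset.range m := by
        apply Finset.filter_eq_self.2
        intro j hj
        have hjm := Finset.mem_range.1 hj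
        have hb : 2*j+1 < n := by omega
        rw [hrt]
        simp only [dif_pos hb]
        exact (M.ord.symm ⟨2*j+1, hb⟩).isLt
      rw [hf]
      simp only [this, Finset.card_range]
      omega
    obtain ⟨t, htn, hft⟩ := hits' f hf0 hfstep q n hfn
    -- the early/late pair sets
    set S : Finset ℕ := (Finset.range m).filter (fun j => rt j < t) with hS
    set Sc : Finset ℕ := (Finset.range m).filter (fun j => ¬ rt j < t) with hSc
    have hScard : S.card = q := hft
    have hSccard : Sc.card = q := by
      have hsum : S.card + Sc.card = m := by
        rw [hS, hSc]
        have := Finset.card_filter_add_card_filter_not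
          (s := Finset.range m) (p := fun j => rt j < t)
        rw [Finset.card_range] at this
        exact this
      omega
    have hSlt : ∀ j ∈ S, j < m := fun j hj => Finset.mem_range.1 (Finset.mem_filter.1 hj).1
    have hSclt : ∀ j ∈ Sc, j < m := fun j hj => Finset.mem_range.1 (Finset.mem_filter.1 hj).1
    -- the family of inputs
    set ν : (Fin q → Bool) → (Fin q → Bool) → Fin n → Bool := fun x y p =>
      if (p : ℕ) % 2 = 0 then decide ((p : ℕ) / 2 ∉ S)
      else if h : (p : ℕ) / 2 ∈ S then x ((S.orderIsoOfFin hScard).symm ⟨(p : ℕ)/2, h⟩)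
      else if h2 : (p : ℕ) / 2 ∈ Sc then y ((Sc.orderIsoOfFin hSccard).symm ⟨(p : ℕ)/2, h2⟩)
      else false with hν
    -- computation of the value subsequences
    have hsub0 : ∀ x y, valueSubseq (n := n) (4*q) false (ν x y) = List.ofFn x := by
      intro x y
      unfold valueSubseq
      rw [hm2]
      set X : ℕ → Bool := fun j2 =>
        if h : j2 ∈ S then x ((S.orderIsoOfFin hScard).symm ⟨j2, h⟩) else false with hX
      rw [List.filterMap_congr (g := fun j => if j ∈ S then some (X j) else none) ?_]
      · rw [filterMap_range_eq_ofFn' S hSlt hScard]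
        congr 1
        funext i
        simp only [hX, dif_pos (Finset.orderEmbOfFin_mem S hScard i),
          rank_inv' S hScard i (Finset.orderEmbOfFin_mem S hScard i)]
      · intro j hj
        rw [List.mem_range] at hj
        have hb : 2*j+1 < n := by omega
        rw [dif_pos hb]
        show _ = if j ∈ S then some (X j) else none
        have e1 : (2*j) % 2 = 0 := by omega
        have e2 : (2*j) / 2 = j := by omega
        have e3 : (2*j+1) % 2 = 1 := by omega
        have e4 : (2*j+1) / 2 = j := by omega
        by_cases hjS : j ∈ S
        · have hmark : ν x y ⟨2*j, by omega⟩ = false := by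
            simp [hν, e1, e2, hjS]
          rw [if_pos hmark, if_pos hjS]
          have hval : ν x y ⟨2*j+1, hb⟩ = X j := by
            simp [hν, hX, e3, e4, hjS]
          rw [hval]
        · have hmark : ν x y ⟨2*j, by omega⟩ = true := by
            simp [hν, e1, e2, hjS]
          rw [hmark, if_neg hjS]
          simp
    have hsub1 : ∀ x y, valueSubseq (n := n) (4*q) true (ν x y) = List.ofFn y := by
      intro x y
      unfold valueSubseq
      rw [hm2]
      set Y : ℕ → Bool := fun j2 =>
        if h : j2 ∈ Sc then y ((Sc.orderIsoOfFin hSccard).symm ⟨j2, h⟩) else false with hY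
      rw [List.filterMap_congr (g := fun j => if j ∈ Sc then some (Y j) else none) ?_]
      · rw [filterMap_range_eq_ofFn' Sc hSclt hSccard]
        congr 1
        funext i
        simp only [hY, dif_pos (Finset.orderEmbOfFin_mem Sc hSccard i),
          rank_inv' Sc hSccard i (Finset.orderEmbOfFin_mem Sc hSccard i)]
      · intro j hj
        rw [List.mem_range] at hj
        have hb : 2*j+1 < n := by omega
        rw [dif_pos hb]
        show _ = if j ∈ Sc then some (Y j) else none
        have e1 : (2*j) % 2 = 0 := by omega
        have e2 : (2*j) / 2 = j := by omega
        have e3 : (2*j+1) % 2 = 1 := by omega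
        have e4 : (2*j+1) / 2 = j := by omega
        have hSSc : j ∈ Sc ↔ ¬ j ∈ S := by
          rw [hS, hSc]
          simp [Finset.mem_filter, Finset.mem_range, hj]
        by_cases hjS : j ∈ Sc
        · have hjS2 : ¬ j ∈ S := hSSc.1 hjS
          have hmark : ν x y ⟨2*j, by omega⟩ = true := by
            simp [hν, e1, e2, hjS2]
          rw [hmark, if_pos hjS]
          have hval : ν x y ⟨2*j+1, hb⟩ = Y j := by
            simp [hν, hY, e3, e4, hjS, hjS2]
          rw [hval]
          simp
        · have hjS2 : j ∈ S := by
            by_contra hc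
            exact hjS (hSSc.2 hc)
          have hmark : ν x y ⟨2*j, by omega⟩ = false := by
            simp [hν, e1, e2, hjS2]
          rw [hmark, if_neg hjS]
          simp
    have hEQS : ∀ x y, NotEQS n (4*q) (ν x y) = true ↔ x ≠ y := by
      intro x y
      rw [NotEQS, EQS, hsub0, hsub1]
      simp [List.ofFn_inj]
    -- splitting the run at the cut
    have hrun : ∀ w : Fin n → Bool, M.run w =
        ((List.finRange n).drop t).foldl (fun v j => M.T j (w (M.ord j)) v)
          (((List.finRange n).take t).foldl (fun v j => M.T j (w (M.ord j)) v) M.start) := by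
      intro w
      rw [DOBDD.run]
      conv_lhs => rw [← List.take_append_drop t (List.finRange n)]
      rw [List.foldl_append]
    have htake : ∀ j : Fin n, j ∈ (List.finRange n).take t → (j : ℕ) < t := by
      intro j hj
      obtain ⟨i, hi, hget⟩ := List.getElem_of_mem hj
      have hlen : ((List.finRange n).take t).length = min t n := by simp
      rw [hlen] at hi
      simp only [List.getElem_take, List.getElem_finRange] at hget
      have : (j : ℕ) = i := by rw [← hget]; rfl
      omega
    have hdrop : ∀ j : Fin n, j ∈ (List.finRange n).drop t → t ≤ (j : ℕ) := by
      intro j hj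
      obtain ⟨i, hi, hget⟩ := List.getElem_of_mem hj
      simp only [List.getElem_drop, List.getElem_finRange] at hget
      have : (j : ℕ) = t + i := by rw [← hget]; rfl
      omega
    -- agreement lemmas
    have hagree_lo : ∀ (x y y' : Fin q → Bool) (p : Fin n),
        ((M.ord.symm p : Fin n) : ℕ) < t → ν x y p = ν x y' p := by
      intro x y y' p hp
      by_cases hpar : (p : ℕ) % 2 = 0
      · simp [hν, hpar]
      · simp only [hν, if_neg hpar]
        by_cases hpS : (p : ℕ) / 2 ∈ S
        · simp only [dif_pos hpS]
        · simp only [dif_neg hpS]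
          by_cases hpSc : (p : ℕ) / 2 ∈ Sc
          · exfalso
            have hpodd : (p : ℕ) = 2 * ((p : ℕ)/2) + 1 := by omega
            have hb : 2 * ((p : ℕ)/2) + 1 < n := by
              have := p.isLt; omega
            have hrteq : rt ((p : ℕ)/2) = ((M.ord.symm p : Fin n) : ℕ) := by
              rw [hrt]
              simp only [dif_pos hb]
              congr 2
              exact Fin.ext hpodd.symm
            have := (Finset.mem_filter.1 hpSc).2
            rw [hrteq] at this
            exact this hp
          · simp only [dif_neg hpSc]
    have hagree_hi : ∀ (x x' y : Fin q → Bool) (p : Fin n),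
        t ≤ ((M.ord.symm p : Fin n) : ℕ) → ν x y p = ν x' y p := by
      intro x x' y p hp
      by_cases hpar : (p : ℕ) % 2 = 0
      · simp [hν, hpar]
      · simp only [hν, if_neg hpar]
        by_cases hpS : (p : ℕ) / 2 ∈ S
        · exfalso
          have hpodd : (p : ℕ) = 2 * ((p : ℕ)/2) + 1 := by omega
          have hb : 2 * ((p : ℕ)/2) + 1 < n := by
            have := p.isLt; omega
          have hrteq : rt ((p : ℕ)/2) = ((M.ord.symm p : Fin n) : ℕ) := by
            rw [hrt]
            simp only [dif_pos hb]
            have hfx : (⟨2 * ((p : ℕ)/2) + 1, hb⟩ : Fin n) = p := Fin.ext hpodd.symm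
            rw [hfx]
          have := (Finset.mem_filter.1 hpS).2
          rw [hrteq] at this
          omega
        · simp only [dif_neg hpS]
    have hpre : ∀ (x y y' : Fin q → Bool),
        ((List.finRange n).take t).foldl (fun v j => M.T j (ν x y (M.ord j)) v) M.start =
        ((List.finRange n).take t).foldl (fun v j => M.T j (ν x y' (M.ord j)) v) M.start := by
      intro x y y'
      apply foldl_congr_mem'
      intro b hb v
      have hb' := htake b hb
      have hlt : ((M.ord.symm (M.ord b) : Fin n) : ℕ) < t := by
        rw [Equiv.symm_apply_apply]; exact hb'
      rw [hagree_lo x y y' (M.ord b) hlt]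
    have hsuf : ∀ (x x' y : Fin q → Bool) (v : Fin d),
        ((List.finRange n).drop t).foldl (fun v j => M.T j (ν x y (M.ord j)) v) v =
        ((List.finRange n).drop t).foldl (fun v j => M.T j (ν x' y (M.ord j)) v) v := by
      intro x x' y v
      apply foldl_congr_mem'
      intro b hb w
      have hb' := hdrop b hb
      have hge : t ≤ ((M.ord.symm (M.ord b) : Fin n) : ℕ) := by
        rw [Equiv.symm_apply_apply]; exact hb'
      rw [hagree_hi x x' y (M.ord b) hge]
    -- the fooling function
    set g : (Fin q → Bool) → Fin d := fun x =>
      ((List.finRange n).take t).foldl (fun v j => M.T j (ν x x (M.ord j)) v) M.start with hg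
    have hginj : Function.Injective g := by
      intro x x' hgeq
      by_contra hne
      have h1 : M.run (ν x x') = M.run (ν x' x') := by
        rw [hrun, hrun]
        simp only [hg] at hgeq
        have e1 : ((List.finRange n).take t).foldl
            (fun v j => M.T j (ν x x' (M.ord j)) v) M.start =
            ((List.finRange n).take t).foldl
            (fun v j => M.T j (ν x' x' (M.ord j)) v) M.start :=
          (hpre x x x').symm.trans hgeq
        rw [e1]
        exact hsuf x x' x' _
      have ha : M.accepts (ν x x') := (hM _).2 ((hEQS x x').2 hne)
      have hb2 : ¬ M.accepts (ν x' x') := by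
        intro h
        have := (hM _).1 h
        rw [hEQS] at this
        exact this rfl
      apply hb2
      rw [DOBDD.accepts, ← h1]
      exact ha
    have hcard := Fintype.card_le_of_injective g hginj
    simp only [Fintype.card_fun, Fintype.card_fin, Fintype.card_bool] at hcard
    have hq4 : 4*q/4 = q := by omega
    rw [hq4]
    exact hcard
  intro N
  exact ⟨max N (4*q), le_max_left _ _, le_max_right _ _,
    fun d M h => main _ (le_max_right _ _) d M h⟩
end

section
/- There exists a constant C > 0 such that for all integers n and k with k a multiple of 4 and 4 ≤ k ≤ n, there exists a nondeterministic OBDD of width at most C·k⁴·log₂ k computing the Boolean function NotEQS^k_n. -/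
namespace NotEQSAux

/-- Monitor state: either a counter, or a recorded bit. -/
abbrev Mon (k : ℕ) := Fin (k/4+2) ⊕ Bool
/-- Branch: `some i` = guess position `i`, `none` = length branch. -/
abbrev Branch (k : ℕ) := Option (Fin (k/4))
abbrev St (k : ℕ) := Mon k × Mon k × Bool
abbrev S (k : ℕ) := Option (Branch k × St k)

def bump (k : ℕ) (g : Branch k) (v : Bool) : Mon k → Mon k
  | .inl c => match g with
      | some i => if (c : ℕ) = (i : ℕ) then .inr v
          else .inl ⟨min ((c : ℕ)+1) (k/4+1), by omega⟩
      | none => .inl ⟨min ((c : ℕ)+1) (k/4+1), by omega⟩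
  | .inr w => .inr w

def stepB (k : ℕ) (g : Branch k) (j : ℕ) (b : Bool) (s : St k) : St k :=
  if j < k then
    if j % 2 = 0 then (s.1, s.2.1, b)
    else if s.2.2 then (s.1, bump k g b s.2.1, b)
    else (bump k g b s.1, s.2.1, b)
  else s

def init (k : ℕ) : St k := (.inl ⟨0, by omega⟩, .inl ⟨0, by omega⟩, false)

def Tset (k : ℕ) (j : ℕ) (b : Bool) : S k → Set (S k)
  | none => if j = 0 then {s | ∃ g : Branch k, s = some (g, stepB k g 0 b (init k))} else ∅
  | some (g, st) => {some (g, stepB k g j b st)}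

def acceptB (k : ℕ) : S k → Bool
  | some (some _, .inr x, .inr y, _) => decide (x ≠ y)
  | some (none, .inl c, _, _) => decide ((c : ℕ) ≠ k/4)
  | _ => false

def detRun (k : ℕ) (ν : ℕ → Bool) (g : Branch k) (m : ℕ) : St k :=
  (List.range m).foldl (fun s j => stepB k g j (ν j) s) (init k)

def setStep (k : ℕ) (ν : ℕ → Bool) (A : Set (S k)) (j : ℕ) : Set (S k) :=
  {w | ∃ v ∈ A, w ∈ Tset k j (ν j) v}

def reachS (k : ℕ) (ν : ℕ → Bool) (m : ℕ) : Set (S k) :=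
  (List.range m).foldl (setStep k ν) {none}

def lst (ν : ℕ → Bool) (b : Bool) (t : ℕ) : List Bool :=
  (List.range t).filterMap (fun s => if ν (2*s) = b then some (ν (2*s+1)) else none)

def Fg (k : ℕ) (g : Branch k) (l : List Bool) : Mon k :=
  match g with
  | some i =>
      match l[(i : ℕ)]? with
      | some x => .inr x
      | none => .inl ⟨min l.length (k/4+1), by omega⟩
  | none => .inl ⟨min l.length (k/4+1), by omega⟩

lemma detRun_succ (k : ℕ) (ν : ℕ → Bool) (g : Branch k) (m : ℕ) :
    detRun k ν g (m+1) = stepB k g m (ν m) (detRun k ν g m) := by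
  simp [detRun, List.range_succ]

lemma lst_succ (ν : ℕ → Bool) (b : Bool) (t : ℕ) :
    lst ν b (t+1) = lst ν b t ++ (if ν (2*t) = b then [ν (2*t+1)] else []) := by
  simp only [lst, List.range_succ, List.filterMap_append, List.filterMap_cons,
    List.filterMap_nil]
  split <;> simp_all

lemma lst_length (ν : ℕ → Bool) (t : ℕ) :
    (lst ν false t).length + (lst ν true t).length = t := by
  induction t with
  | zero => simp [lst]
  | succ t ih =>
      rw [lst_succ, lst_succ]
      cases h : ν (2*t) <;> simp [h] <;> omega

lemma Fg_append (k : ℕ) (g : Branch k) (l : List Bool) (v : Bool) :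
    Fg k g (l ++ [v]) = bump k g v (Fg k g l) := by
  match g with
  | none =>
      simp only [Fg, bump]
      exact congrArg Sum.inl (Fin.ext (by simp))
  | some i =>
      have hi : (i : ℕ) < k/4 := i.isLt
      rcases h : l[(i : ℕ)]? with _ | x
      · have hlen : l.length ≤ (i : ℕ) := List.getElem?_eq_none_iff.mp h
        rcases eq_or_lt_of_le hlen with heq | hlt
        · have h2 : (l ++ [v])[(i : ℕ)]? = some v := by
            rw [← heq]; simp
          simp only [Fg, h, h2, bump]
          rw [if_pos (show min l.length (k/4+1) = (i:ℕ) by omega)]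
        · have h2 : (l ++ [v])[(i : ℕ)]? = none := by
            rw [List.getElem?_eq_none_iff]; simp; omega
          simp only [Fg, h, h2, bump]
          rw [if_neg (show ¬ min l.length (k/4+1) = (i:ℕ) by omega)]
          exact congrArg Sum.inl (Fin.ext (by simp))
      · have hilt : (i : ℕ) < l.length := by
          by_contra hc
          rw [List.getElem?_eq_none_iff.mpr (by omega)] at h; cases h
        have h2 : (l ++ [v])[(i : ℕ)]? = some x := by
          rw [List.getElem?_append_left hilt, h]
        simp only [Fg, h, h2, bump]

lemma Fg_inr (k : ℕ) (g : Branch k) (l : List Bool) (x : Bool)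
    (h : Fg k g l = .inr x) : ∃ i : Fin (k/4), g = some i ∧ l[(i : ℕ)]? = some x := by
  match g with
  | none => simp [Fg] at h
  | some i =>
      refine ⟨i, rfl, ?_⟩
      rcases h' : l[(i : ℕ)]? with _ | y
      · simp [Fg, h'] at h
      · simp [Fg, h'] at h; rw [h]

lemma Fg_nil (k : ℕ) (g : Branch k) : Fg k g [] = .inl ⟨0, by omega⟩ := by
  match g with
  | none => exact congrArg Sum.inl (Fin.ext (by simp))
  | some i =>
      show Fg k (some i) [] = _
      have h : ([] : List Bool)[(i : ℕ)]? = none := by simp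
      simp only [Fg, h]
      exact congrArg Sum.inl (Fin.ext (by simp))

lemma detRun_invariant (k : ℕ) (ν : ℕ → Bool) (g : Branch k) (t : ℕ) (ht : t ≤ k/2) :
    (detRun k ν g (2*t)).1 = Fg k g (lst ν false t) ∧
    (detRun k ν g (2*t)).2.1 = Fg k g (lst ν true t) := by
  induction t with
  | zero =>
      have h0 : detRun k ν g 0 = init k := by simp [detRun]
      have hl : lst ν false 0 = [] := by simp [lst]
      have hr : lst ν true 0 = [] := by simp [lst]
      rw [show 2*0 = 0 from rfl, h0, hl, hr, Fg_nil]
      exact ⟨rfl, rfl⟩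
  | succ t ih =>
      have ht' : t ≤ k/2 := by omega
      obtain ⟨ih1, ih2⟩ := ih ht'
      have h2t : 2*t < k := by omega
      have h2t1 : 2*t+1 < k := by omega
      have e1 : 2*(t+1) = (2*t+1)+1 := by ring
      rw [e1, detRun_succ, detRun_succ]
      set s := detRun k ν g (2*t) with hs
      have step1 : stepB k g (2*t) (ν (2*t)) s = (s.1, s.2.1, ν (2*t)) := by
        simp [stepB, h2t, Nat.mul_mod_right]
      rw [step1]
      have hmod : (2*t+1) % 2 = 1 := by omega
      cases hmark : ν (2*t) with
      | false =>
          have step2 : stepB k g (2*t+1) (ν (2*t+1)) (s.1, s.2.1, false)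
              = (bump k g (ν (2*t+1)) s.1, s.2.1, ν (2*t+1)) := by
            simp [stepB, h2t1, hmod]
          rw [step2]
          rw [lst_succ, lst_succ, hmark]
          simp only [if_pos rfl, reduceIte]
          constructor
          · show bump k g (ν (2*t+1)) s.1 = Fg k g (lst ν false t ++ [ν (2*t+1)])
            rw [Fg_append, ih1]
          · show s.2.1 = Fg k g (lst ν true t ++ [])
            rw [List.append_nil]; exact ih2
      | true =>
          have step2 : stepB k g (2*t+1) (ν (2*t+1)) (s.1, s.2.1, true)
              = (s.1, bump k g (ν (2*t+1)) s.2.1, ν (2*t+1)) := by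
            simp [stepB, h2t1, hmod]
          rw [step2]
          rw [lst_succ, lst_succ, hmark]
          simp only [reduceIte]
          constructor
          · show s.1 = Fg k g (lst ν false t ++ [])
            rw [List.append_nil]; exact ih1
          · show bump k g (ν (2*t+1)) s.2.1 = Fg k g (lst ν true t ++ [ν (2*t+1)])
            rw [Fg_append, ih2]

lemma detRun_stable (k : ℕ) (ν : ℕ → Bool) (g : Branch k) (m : ℕ) (hm : k ≤ m) :
    detRun k ν g m = detRun k ν g k := by
  induction m with
  | zero => exact congrArg (detRun k ν g) (by omega)
  | succ m ih =>
      rcases Nat.lt_or_ge k (m+1) with h | h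
      · have hk : k ≤ m := by omega
        rw [detRun_succ, ih hk]
        unfold stepB
        rw [if_neg (by omega : ¬ m < k)]
      · exact congrArg (detRun k ν g) (by omega)

lemma reachS_eq (k : ℕ) (ν : ℕ → Bool) (m : ℕ) (hm : 1 ≤ m) :
    reachS k ν m = {s | ∃ g : Branch k, s = some (g, detRun k ν g m)} := by
  induction m with
  | zero => omega
  | succ m ih =>
      rcases Nat.eq_or_lt_of_le hm with h1 | h1
      · have hm0 : m = 0 := by omega
        subst hm0
        have hd : ∀ g : Branch k, detRun k ν g 1 = stepB k g 0 (ν 0) (init k) := by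
          intro g
          rw [show (1:ℕ) = 0 + 1 from rfl, detRun_succ]
          simp [detRun]
        have hr : reachS k ν 1 = setStep k ν {none} 0 := by
          simp [reachS, List.range_succ, List.range_zero]
        rw [hr]
        ext w
        simp only [setStep, Set.mem_setOf_eq, Set.mem_singleton_iff]
        constructor
        · rintro ⟨v, hv, hw⟩
          rw [hv] at hw
          simp only [Tset, if_pos rfl, Set.mem_setOf_eq] at hw
          obtain ⟨g, hg⟩ := hw
          exact ⟨g, by rw [hg, hd]⟩
        · rintro ⟨g, hg⟩
          refine ⟨none, rfl, ?_⟩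
          simp only [Tset, if_pos rfl, Set.mem_setOf_eq]
          exact ⟨g, by rw [hg, hd]⟩
      · have hm1 : 1 ≤ m := by omega
        have hstep : reachS k ν (m+1) = setStep k ν (reachS k ν m) m := by
          simp [reachS, List.range_succ]
        rw [hstep, ih hm1]
        ext w
        simp only [setStep, Set.mem_setOf_eq]
        constructor
        · rintro ⟨v, ⟨g, hg⟩, hw⟩
          rw [hg] at hw
          simp only [Tset, Set.mem_singleton_iff] at hw
          exact ⟨g, by rw [hw, detRun_succ]⟩
        · rintro ⟨g, hg⟩
          refine ⟨some (g, detRun k ν g m), ⟨g, rfl⟩, ?_⟩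
          simp only [Tset, Set.mem_singleton_iff]
          rw [hg, detRun_succ]

lemma acceptB_char (k : ℕ) (hk4 : 4 ∣ k) (hk : 4 ≤ k) (ν : ℕ → Bool) (n : ℕ) (hkn : k ≤ n) :
    (∃ s ∈ reachS k ν n, acceptB k s = true) ↔ lst ν false (k/2) ≠ lst ν true (k/2) := by
  set A := lst ν false (k/2) with hA
  set B := lst ν true (k/2) with hB
  have hAB : A.length + B.length = k/2 := lst_length ν (k/2)
  have hn1 : 1 ≤ n := by omega
  have h2k : 2 * (k/2) = k := by omega
  have h12 : ∀ g : Branch k, (detRun k ν g n).1 = Fg k g A ∧ (detRun k ν g n).2.1 = Fg k g B := by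
    intro g
    have hi := detRun_invariant k ν g (k/2) le_rfl
    rw [h2k] at hi
    rw [detRun_stable k ν g n hkn]
    exact hi
  have h1 : ∀ g : Branch k, (detRun k ν g n).1 = Fg k g A := fun g => (h12 g).1
  have h2 : ∀ g : Branch k, (detRun k ν g n).2.1 = Fg k g B := fun g => (h12 g).2
  have hst : ∀ g : Branch k,
      detRun k ν g n = (Fg k g A, Fg k g B, (detRun k ν g n).2.2) := by
    intro g
    rw [← h1 g, ← h2 g]
  rw [reachS_eq k ν n hn1]
  constructor
  · rintro ⟨s, ⟨g, rfl⟩, hacc⟩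
    intro hEq
    have hlenEq : A.length = B.length := by rw [hEq]
    have hlen : A.length = k/4 := by omega
    rw [hst g] at hacc
    match g with
    | none =>
        simp only [acceptB, Fg, decide_eq_true_eq] at hacc
        apply hacc
        show min A.length (k/4+1) = k/4
        omega
    | some i =>
        rcases hAi : A[(i : ℕ)]? with _ | x
        · simp only [acceptB, Fg, hAi] at hacc
          exact Bool.false_ne_true hacc
        · rcases hBi : B[(i : ℕ)]? with _ | y
          · simp only [acceptB, Fg, hAi, hBi] at hacc
            exact Bool.false_ne_true hacc
          · simp only [acceptB, Fg, hAi, hBi, decide_eq_true_eq] at hacc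
            apply hacc
            rw [hEq] at hAi
            rw [hAi] at hBi
            exact Option.some_inj.mp hBi
  · intro hne
    by_cases hlen : A.length = k/4
    · have hlenB : B.length = k/4 := by omega
      have hex : ∃ i : ℕ, A[i]? ≠ B[i]? := by
        by_contra h
        push_neg at h
        exact hne (List.ext_getElem? h)
      obtain ⟨i, hi⟩ := hex
      have hik : i < k/4 := by
        by_contra h
        apply hi
        rw [List.getElem?_eq_none_iff.mpr (by omega), List.getElem?_eq_none_iff.mpr (by omega)]
      have hiA : i < A.length := by omega
      have hiB : i < B.length := by omega
      rcases hAi : A[i]? with _ | x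
      · rw [List.getElem?_eq_none_iff] at hAi; omega
      rcases hBi : B[i]? with _ | y
      · rw [List.getElem?_eq_none_iff] at hBi; omega
      refine ⟨some (some ⟨i, hik⟩, detRun k ν (some ⟨i, hik⟩) n), ⟨some ⟨i, hik⟩, rfl⟩, ?_⟩
      rw [hst (some ⟨i, hik⟩)]
      simp only [acceptB, Fg, hAi, hBi, decide_eq_true_eq]
      intro hxy
      apply hi
      rw [hAi, hBi, hxy]
    · refine ⟨some (none, detRun k ν none n), ⟨none, rfl⟩, ?_⟩
      rw [hst none]
      simp only [acceptB, Fg, decide_eq_true_eq]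
      show ¬ min A.length (k/4+1) = k/4
      omega

/-- Extend `ν : Fin n → Bool` to `ℕ → Bool` by `false`. -/
def extend {n : ℕ} (ν : Fin n → Bool) : ℕ → Bool :=
  fun j => if h : j < n then ν ⟨j, h⟩ else false

lemma extend_coe {n : ℕ} (ν : Fin n → Bool) (j : Fin n) : extend ν (j : ℕ) = ν j := by
  simp [extend]

lemma valueSubseq_eq (n k : ℕ) (hkn : k ≤ n) (ν : Fin n → Bool) (b : Bool) :
    valueSubseq k b ν = lst (extend ν) b (k/2) := by
  unfold valueSubseq lst
  apply List.filterMap_congr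
  intro t ht
  rw [List.mem_range] at ht
  have h1 : 2*t+1 < n := by omega
  have h0 : 2*t < n := by omega
  rw [dif_pos h1]
  simp only [extend, dif_pos h1, dif_pos h0]

lemma foldl_image (k d : ℕ) (e : S k ≃ Fin d) (ν' : ℕ → Bool) :
    ∀ (l : List ℕ) (A : Set (S k)),
      l.foldl (fun Sv j => {w | ∃ v ∈ Sv, w ∈ e '' (Tset k j (ν' j) (e.symm v))}) (e '' A)
        = e '' l.foldl (setStep k ν') A := by
  intro l
  induction l with
  | nil => intro A; rfl
  | cons j l ih =>
      intro A
      rw [List.foldl_cons, List.foldl_cons, ← ih]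
      congr 1
      ext w
      simp only [Set.mem_setOf_eq, Set.mem_image, setStep]
      constructor
      · rintro ⟨v, ⟨a, ha, rfl⟩, u, hu, rfl⟩
        rw [e.symm_apply_apply] at hu
        exact ⟨u, ⟨a, ha, hu⟩, rfl⟩
      · rintro ⟨u, ⟨a, ha, hu⟩, rfl⟩
        refine ⟨e a, ⟨a, ha, rfl⟩, u, ?_, rfl⟩
        rw [e.symm_apply_apply]
        exact hu

end NotEQSAux


/-- There is a constant `C > 0` such that for all `n, k` with `4 ∣ k` and `4 ≤ k ≤ n`,
there is a nondeterministic OBDD of width at most `C·k⁴·log₂ k` computing `NotEQS^k_n`. -/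
theorem notEQS_nondeterministic_upper_bound :
    ∃ C : ℕ, 0 < C ∧
      ∀ n k : ℕ, 4 ∣ k → 4 ≤ k → k ≤ n →
        ∃ d : ℕ, d ≤ C * k ^ 4 * Nat.log 2 k ∧
          ∃ M : NOBDD n d, M.computes (NotEQS n k) := by
  refine ⟨1, one_pos, ?_⟩
  intro n k hdvd hk4 hkn
  classical
  set d := Fintype.card (NotEQSAux.S k) with hd
  let e : NotEQSAux.S k ≃ Fin d := Fintype.equivFin (NotEQSAux.S k)
  refine ⟨d, ?_, ?_⟩
  · -- width bound
    obtain ⟨q, hq⟩ := hdvd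
    have hq1 : 1 ≤ q := by omega
    have hq4 : k / 4 = q := by omega
    have hcard : d = ((k/4 + 2 + 2) * ((k/4 + 2 + 2) * 2) * (k/4 + 1)) + 1 := by
      rw [hd]
      simp [NotEQSAux.S, NotEQSAux.St, NotEQSAux.Mon, NotEQSAux.Branch,
        Fintype.card_option, Fintype.card_prod,
        Fintype.card_sum, Fintype.card_fin, Fintype.card_bool]
      ring
    have hlog : 2 ≤ Nat.log 2 k := Nat.le_log_of_pow_le (by norm_num) (by omega)
    have hk4pow : k ^ 4 = 256 * q ^ 4 := by subst hq; ring
    have e1 : q + 2 + 2 ≤ 5 * q := by omega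
    have e2 : q + 1 ≤ 2 * q := by omega
    have hq34 : q ^ 3 ≤ q ^ 4 := Nat.pow_le_pow_right (by omega) (by omega)
    have hq04 : 1 ≤ q ^ 4 := Nat.one_le_pow _ _ (by omega)
    calc d = ((q + 2 + 2) * ((q + 2 + 2) * 2) * (q + 1)) + 1 := by rw [hcard, hq4]
      _ ≤ ((5*q) * ((5*q) * 2) * (2*q)) + 1 := by gcongr
      _ = 100 * q ^ 3 + 1 := by ring
      _ ≤ 512 * q ^ 4 := by nlinarith
      _ = 256 * q ^ 4 * 2 := by ring
      _ ≤ 1 * k ^ 4 * Nat.log 2 k := by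
          rw [hk4pow, one_mul]
          exact Nat.mul_le_mul_left _ hlog
  · -- the machine
    let M : NOBDD n d :=
      { ord := Equiv.refl _,
        T := fun j b v => e '' (NotEQSAux.Tset k (j : ℕ) b (e.symm v)),
        start := e none,
        Accept := Finset.univ.filter (fun v => NotEQSAux.acceptB k (e.symm v) = true) }
    refine ⟨M, ?_⟩
    intro ν
    have hreach : M.reach ν = e '' NotEQSAux.reachS k (NotEQSAux.extend ν) n := by
      have hfun : (fun (Sv : Set (Fin d)) (j : Fin n) =>
            {w | ∃ v ∈ Sv, w ∈ M.T j (ν (M.ord j)) v})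
          = fun (Sv : Set (Fin d)) (j : Fin n) =>
            {w | ∃ v ∈ Sv, w ∈ e '' (NotEQSAux.Tset k (j : ℕ)
                (NotEQSAux.extend ν (j : ℕ)) (e.symm v))} := by
        funext Sv j
        have h2 : NotEQSAux.extend ν (j : ℕ) = ν j := NotEQSAux.extend_coe ν j
        rw [h2]
        rfl
      show (List.finRange n).foldl
          (fun Sv j => {w | ∃ v ∈ Sv, w ∈ M.T j (ν (M.ord j)) v}) {M.start} = _
      rw [hfun]
      have hsingle : ({M.start} : Set (Fin d)) = e '' {none} := by
        rw [Set.image_singleton]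
      rw [hsingle]
      have hmap : (List.finRange n).foldl
          (fun (Sv : Set (Fin d)) (j : Fin n) =>
            {w | ∃ v ∈ Sv, w ∈ e '' (NotEQSAux.Tset k (j : ℕ)
                (NotEQSAux.extend ν (j : ℕ)) (e.symm v))})
          (e '' {none})
          = (List.range n).foldl
          (fun (Sv : Set (Fin d)) (j : ℕ) =>
            {w | ∃ v ∈ Sv, w ∈ e '' (NotEQSAux.Tset k j
                (NotEQSAux.extend ν j) (e.symm v))})
          (e '' {none}) := by
        rw [← (show (List.finRange n).map (fun i : Fin n => (i : ℕ)) = List.range n from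
          List.ext_getElem (by simp) (by simp)), List.foldl_map]
      rw [hmap, NotEQSAux.foldl_image k d e (NotEQSAux.extend ν) (List.range n) {none}]
      rfl
    have hAcc : ∀ v : Fin d, v ∈ M.Accept ↔ NotEQSAux.acceptB k (e.symm v) = true := by
      intro v
      show v ∈ Finset.univ.filter (fun v => NotEQSAux.acceptB k (e.symm v) = true) ↔ _
      rw [Finset.mem_filter]
      simp
    show (∃ v ∈ M.reach ν, v ∈ M.Accept) ↔ _
    rw [hreach]
    have hls : valueSubseq k false ν = NotEQSAux.lst (NotEQSAux.extend ν) false (k/2) :=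
      NotEQSAux.valueSubseq_eq n k hkn ν false
    have hlt : valueSubseq k true ν = NotEQSAux.lst (NotEQSAux.extend ν) true (k/2) :=
      NotEQSAux.valueSubseq_eq n k hkn ν true
    have hiff : (∃ v ∈ e '' NotEQSAux.reachS k (NotEQSAux.extend ν) n, v ∈ M.Accept)
        ↔ (∃ s ∈ NotEQSAux.reachS k (NotEQSAux.extend ν) n,
            NotEQSAux.acceptB k s = true) := by
      constructor
      · rintro ⟨v, ⟨s, hs, rfl⟩, hv⟩
        rw [hAcc, e.symm_apply_apply] at hv
        exact ⟨s, hs, hv⟩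
      · rintro ⟨s, hs, hacc⟩
        refine ⟨e s, ⟨s, hs, rfl⟩, ?_⟩
        rw [hAcc, e.symm_apply_apply]
        exact hacc
    rw [hiff, NotEQSAux.acceptB_char k hdvd hk4 (NotEQSAux.extend ν) n hkn]
    rw [← hls, ← hlt]
    simp [NotEQS, EQS]
end
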